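/- arXiv:1512.04666 — 5 statements merged into one kernel-verified Lean document; each statement's English description precedes it below -/
import Mathlib

section
/- If u and v are linearly independent vectors in the open unit ball of ℝⁿ, then u ⊕ v ≠ v ⊕ u; consequently, u ⊕ v = v ⊕ u holds if and only if u and v are linearly dependent. -/
noncomputable def eAdd {n : ℕ} (u v : EuclideanSpace ℝ (Fin n)) : EuclideanSpace ℝ (Fin n) :=
  (1 / (1 + (inner ℝ u v : ℝ))) •
    (u + Real.sqrt (1 - ‖u‖ ^ 2) • v
      + (((inner ℝ u v : ℝ)) / (1 + Real.sqrt (1 - ‖u‖ ^ 2))) • u)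

noncomputable def eBall (n : ℕ) : Set (EuclideanSpace ℝ (Fin n)) :=
  Metric.ball (0 : EuclideanSpace ℝ (Fin n)) 1

lemma eAdd_zero_left {n : ℕ} (v : EuclideanSpace ℝ (Fin n)) : eAdd 0 v = v := by
  simp [eAdd]

lemma eAdd_zero_right {n : ℕ} (v : EuclideanSpace ℝ (Fin n)) : eAdd v 0 = v := by
  simp [eAdd]

lemma eAdd_smul_comm {n : ℕ} (u : EuclideanSpace ℝ (Fin n)) (c : ℝ)
    (hu : ‖u‖ < 1) (hcu : ‖c • u‖ < 1) : eAdd u (c • u) = eAdd (c • u) u := by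
  set a : ℝ := ‖u‖ with ha
  have ha0 : 0 ≤ a := norm_nonneg u
  have hca : ‖c • u‖ = |c| * a := by rw [norm_smul]; rfl
  have hsq : |c| ^ 2 = c ^ 2 := sq_abs c
  have h1 : (0:ℝ) ≤ 1 - a ^ 2 := by nlinarith
  have h2 : (0:ℝ) ≤ 1 - c ^ 2 * a ^ 2 := by
    have := hcu
    rw [hca] at this
    have h3 : |c| * a * (|c| * a) < 1 := by nlinarith [mul_nonneg (abs_nonneg c) ha0]
    nlinarith [sq_abs c]
  set γ : ℝ := Real.sqrt (1 - a ^ 2) with hγ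
  set δ : ℝ := Real.sqrt (1 - c ^ 2 * a ^ 2) with hδ
  have hγ2 : γ ^ 2 = 1 - a ^ 2 := Real.sq_sqrt h1
  have hδ2 : δ ^ 2 = 1 - c ^ 2 * a ^ 2 := Real.sq_sqrt h2
  have hγ0 : 0 ≤ γ := Real.sqrt_nonneg _
  have hδ0 : 0 ≤ δ := Real.sqrt_nonneg _
  have hγne : (1:ℝ) + γ ≠ 0 := by positivity
  have hδne : (1:ℝ) + δ ≠ 0 := by positivity
  have hinner : (inner ℝ u (c • u) : ℝ) = c * a ^ 2 := by
    rw [real_inner_smul_right, real_inner_self_eq_norm_sq]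
  have hinner' : (inner ℝ (c • u) u : ℝ) = c * a ^ 2 := by
    rw [real_inner_comm, hinner]
  have hden : (0:ℝ) < 1 + c * a ^ 2 := by nlinarith [abs_nonneg c, le_abs_self c, neg_abs_le c]
  unfold eAdd
  rw [hinner, hinner', hca] at *
  rw [show Real.sqrt (1 - (|c| * a) ^ 2) = δ by rw [hδ]; ring_nf; rw [hsq]; ring_nf]
  rw [← hγ]
  have key : (1 / (1 + c * a ^ 2)) * (1 + c * γ + (c * a ^ 2) / (1 + γ))
      = (1 / (1 + c * a ^ 2)) * (c + δ + (c * a ^ 2) / (1 + δ) * c) := by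
    have e1 : 1 + c * γ + (c * a ^ 2) / (1 + γ) = 1 + c := by
      field_simp
      linear_combination c * hγ2
    have e2 : c + δ + (c * a ^ 2) / (1 + δ) * c = 1 + c := by
      field_simp
      linear_combination hδ2
    rw [e1, e2]
  have lhs : (1 / (1 + c * a ^ 2)) •
      (u + γ • (c • u) + ((c * a ^ 2) / (1 + γ)) • u)
      = ((1 / (1 + c * a ^ 2)) * (1 + c * γ + (c * a ^ 2) / (1 + γ))) • u := by
    module
  have rhs : (1 / (1 + c * a ^ 2)) •
      ((c • u) + δ • u + ((c * a ^ 2) / (1 + δ)) • (c • u))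
      = ((1 / (1 + c * a ^ 2)) * (c + δ + (c * a ^ 2) / (1 + δ) * c)) • u := by
    module
  rw [lhs, rhs, key]

lemma eAdd_comm_of_ne_indep {n : ℕ} (u v : EuclideanSpace ℝ (Fin n))
    (hu : ‖u‖ < 1) (hv : ‖v‖ < 1)
    (hli : LinearIndependent ℝ ![u, v]) : eAdd u v ≠ eAdd v u := by
  intro h
  set a : ℝ := ‖u‖ with ha
  set b : ℝ := ‖v‖ with hb
  have ha0 : 0 ≤ a := norm_nonneg u
  have hb0 : 0 ≤ b := norm_nonneg v
  set s : ℝ := inner ℝ u v with hs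
  have hsb : |s| ≤ a * b := abs_real_inner_le_norm u v
  have hs1 : 1 + s > 0 := by
    have := neg_abs_le s
    nlinarith
  have h1 : (0:ℝ) ≤ 1 - a ^ 2 := by nlinarith
  have h2 : (0:ℝ) ≤ 1 - b ^ 2 := by nlinarith
  set γ : ℝ := Real.sqrt (1 - a ^ 2) with hγ
  set δ : ℝ := Real.sqrt (1 - b ^ 2) with hδ
  have hγ2 : γ ^ 2 = 1 - a ^ 2 := Real.sq_sqrt h1
  have hδ2 : δ ^ 2 = 1 - b ^ 2 := Real.sq_sqrt h2
  have hγ0 : 0 ≤ γ := Real.sqrt_nonneg _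
  have hδ0 : 0 ≤ δ := Real.sqrt_nonneg _
  have hγne : (1:ℝ) + γ ≠ 0 := by positivity
  have hδne : (1:ℝ) + δ ≠ 0 := by positivity
  have hvu : (inner ℝ v u : ℝ) = s := by rw [real_inner_comm]
  unfold eAdd at h
  rw [hvu, ← hs, ← hγ, ← hδ] at h
  have hne : (1 / (1 + s) : ℝ) ≠ 0 := by positivity
  have heq : u + γ • v + (s / (1 + γ)) • u = v + δ • u + (s / (1 + δ)) • v :=
    smul_right_injective (EuclideanSpace ℝ (Fin n)) hne h
  clear_value γ δ s a b
  have key : (1 + s / (1 + γ) - δ) • u + (γ - (1 + s / (1 + δ))) • v = 0 := by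
    have expand : (1 + s / (1 + γ) - δ) • u + (γ - (1 + s / (1 + δ))) • v
        = (u + γ • v + (s / (1 + γ)) • u) - (v + δ • u + (s / (1 + δ)) • v) := by
      module
    rw [expand, heq, sub_self]
  obtain ⟨hA, hB⟩ := LinearIndependent.pair_iff.mp hli _ _ key
  have hA' : (1 + s / (1 + γ)) = δ := by linarith
  have hB' : γ = 1 + s / (1 + δ) := by linarith
  have hA2 : (1 + γ) + s = δ * (1 + γ) := by
    field_simp at hA'
    linarith
  have hB2 : γ * (1 + δ) = (1 + δ) + s := by
    field_simp at hB'
    linarith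
  have hγδ : γ = δ := by linear_combination hA2 / 2 + hB2 / 2
  rw [← hγδ] at hA2
  have hseq : s = γ ^ 2 - 1 := by linear_combination hA2
  have hab : a ^ 2 = b ^ 2 := by
    have : (1:ℝ) - a ^ 2 = 1 - b ^ 2 := by rw [← hγ2, ← hδ2, hγδ]
    linarith
  have hnorm : ‖u + v‖ ^ 2 = 0 := by
    rw [norm_add_sq_real, ← hs, ← ha, ← hb]
    linear_combination 2 * hseq + 2 * hγ2 - hab
  have huv : u + v = 0 := by
    have := pow_eq_zero_iff (n := 2) (by norm_num) |>.mp hnorm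
    exact norm_eq_zero.mp this
  have := LinearIndependent.pair_iff.mp hli 1 1 (by simpa using huv)
  exact one_ne_zero this.1

theorem stmt_5 {n : ℕ} (u v : EuclideanSpace ℝ (Fin n))
    (hu : u ∈ eBall n) (hv : v ∈ eBall n) :
    (LinearIndependent ℝ ![u, v] → eAdd u v ≠ eAdd v u) ∧
    (eAdd u v = eAdd v u ↔ ¬ LinearIndependent ℝ ![u, v]) := by
  have hu' : ‖u‖ < 1 := by simpa [eBall] using hu
  have hv' : ‖v‖ < 1 := by simpa [eBall] using hv
  have fwd := eAdd_comm_of_ne_indep u v hu' hv'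
  refine ⟨fwd, ⟨fun h hli => fwd hli h, fun hnl => ?_⟩⟩
  rw [LinearIndependent.pair_iff] at hnl
  push_neg at hnl
  obtain ⟨p, q, hpq, hne⟩ := hnl
  by_cases hq : q = 0
  · have hp : p ≠ 0 := by tauto
    have hu0 : u = 0 := by
      have : p • u = 0 := by simpa [hq] using hpq
      exact (smul_eq_zero.mp this).resolve_left hp
    rw [hu0, eAdd_zero_left, eAdd_zero_right]
  · have hveq : v = (-p / q) • u := by
      have : q • v = (-p) • u := by
        have h0 : q • v + p • u = 0 := by rw [add_comm]; exact hpq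
        rw [add_eq_zero_iff_eq_neg] at h0
        rw [h0, neg_smul]
      have h2 : (q⁻¹ * q) • v = (q⁻¹ * (-p)) • u := by
        rw [mul_smul, mul_smul, this]
      rw [inv_mul_cancel₀ hq, one_smul] at h2
      rw [h2]
      congr 1
      field_simp
    rw [hveq]
    exact eAdd_smul_comm u (-p / q) hu' (by rw [← hveq]; exact hv')
end

section
/- Three points x, y, z in the open unit ball of ℝⁿ are collinear (in the ordinary Euclidean sense) if and only if ((−x) ⊕ y) ⊕ ((−x) ⊕ z) = ((−x) ⊕ z) ⊕ ((−x) ⊕ y). -/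
section Aux

variable {n : ℕ}

lemma inner_lt_one' {u v : EuclideanSpace ℝ (Fin n)} (hu : ‖u‖ < 1) (hv : ‖v‖ < 1) :
    |(inner ℝ u v : ℝ)| < 1 := by
  calc |(inner ℝ u v : ℝ)| ≤ ‖u‖ * ‖v‖ := abs_real_inner_le_norm u v
  _ < 1 := by nlinarith [norm_nonneg u, norm_nonneg v]

lemma eAdd_norm_lt {u v : EuclideanSpace ℝ (Fin n)} (hu : ‖u‖ < 1) (hv : ‖v‖ < 1) :
    ‖eAdd u v‖ < 1 := by
  set t : ℝ := inner ℝ u v with htdef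
  set s : ℝ := Real.sqrt (1 - ‖u‖ ^ 2) with hsdef
  have hs2 : s ^ 2 = 1 - ‖u‖ ^ 2 := Real.sq_sqrt (by nlinarith [norm_nonneg u])
  have hs0 : 0 ≤ s := Real.sqrt_nonneg _
  have ht : |t| < 1 := inner_lt_one' hu hv
  have h1t : 0 < 1 + t := by cases abs_lt.mp ht; linarith
  have h1s : 0 < 1 + s := by linarith
  set w : EuclideanSpace ℝ (Fin n) := u + s • v + (t / (1 + s)) • u with hwdef
  have hw : ‖w‖ ^ 2 = (1 + t/(1+s))^2 * ‖u‖^2 + s^2 * ‖v‖^2 + 2 * (1 + t/(1+s)) * s * t := by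
    rw [← real_inner_self_eq_norm_sq]
    have hc : (inner ℝ v u : ℝ) = t := by rw [real_inner_comm]
    simp only [hwdef, inner_add_left, inner_add_right, real_inner_smul_left,
      real_inner_smul_right, hc, ← htdef]
    rw [real_inner_self_eq_norm_sq, real_inner_self_eq_norm_sq]
    ring
  have hu2 : ‖u‖ ^ 2 = 1 - s ^ 2 := by linarith
  have key : ‖w‖^2 = (1 + t)^2 - s^2 * (1 - ‖v‖^2) := by
    rw [hw, hu2]
    field_simp
    ring
  have hs2pos : 0 < s ^ 2 := by nlinarith [norm_nonneg u]
  have hv2 : ‖v‖ ^ 2 < 1 := by nlinarith [norm_nonneg v]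
  have heq : ‖eAdd u v‖^2 = (1/(1+t))^2 * ‖w‖^2 := by
    rw [eAdd, norm_smul]
    simp only [← htdef, ← hsdef, ← hwdef]
    rw [mul_pow, Real.norm_eq_abs, sq_abs]
  have hlt : ‖eAdd u v‖^2 < 1 := by
    rw [heq, key]
    have h5 : (1/(1+t))^2 * ((1 + t)^2 - s^2 * (1 - ‖v‖^2)) = 1 - s^2*(1-‖v‖^2)/(1+t)^2 := by
      field_simp
    rw [h5]
    have : 0 < s^2*(1-‖v‖^2)/(1+t)^2 :=
      div_pos (mul_pos hs2pos (by linarith)) (pow_pos h1t 2)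
    linarith
  nlinarith [norm_nonneg (eAdd u v)]

lemma eAdd_eq {u v : EuclideanSpace ℝ (Fin n)} :
    eAdd u v = ((1 / (1 + (inner ℝ u v : ℝ))) * (1 + (inner ℝ u v : ℝ) / (1 + Real.sqrt (1 - ‖u‖ ^ 2)))) • u
      + ((1 / (1 + (inner ℝ u v : ℝ))) * Real.sqrt (1 - ‖u‖ ^ 2)) • v := by
  rw [eAdd, smul_add, smul_add, smul_smul, smul_smul]
  module

lemma eAdd_smul_self {u : EuclideanSpace ℝ (Fin n)} {c : ℝ} (hu : ‖u‖ < 1) (hcu : ‖c • u‖ < 1) :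
    eAdd u (c • u) = ((1 + c) / (1 + c * ‖u‖ ^ 2)) • u ∧
    eAdd (c • u) u = ((1 + c) / (1 + c * ‖u‖ ^ 2)) • u := by
  have hu0 : 0 ≤ ‖u‖ := norm_nonneg u
  have hs2 : Real.sqrt (1 - ‖u‖ ^ 2) ^ 2 = 1 - ‖u‖ ^ 2 := Real.sq_sqrt (by nlinarith)
  have hs0 : 0 ≤ Real.sqrt (1 - ‖u‖ ^ 2) := Real.sqrt_nonneg _
  have hcu' : |c| * ‖u‖ < 1 := by rwa [norm_smul, Real.norm_eq_abs] at hcu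
  have habs : |c * ‖u‖ ^ 2| < 1 := by
    rw [abs_mul, abs_of_nonneg (sq_nonneg ‖u‖)]
    rcases eq_or_lt_of_le hu0 with h | h
    · simp [← h]
    · calc |c| * ‖u‖ ^ 2 = (|c| * ‖u‖) * ‖u‖ := by ring
        _ < 1 := by nlinarith [abs_nonneg c]
  have h1t : 0 < 1 + c * ‖u‖ ^ 2 := by cases abs_lt.mp habs; linarith
  have hiuu : (inner ℝ u u : ℝ) = ‖u‖ ^ 2 := real_inner_self_eq_norm_sq u
  have hicu : (inner ℝ u (c • u) : ℝ) = c * ‖u‖ ^ 2 := by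
    rw [real_inner_smul_right, hiuu]
  have hiuc : (inner ℝ (c • u) u : ℝ) = c * ‖u‖ ^ 2 := by
    rw [real_inner_smul_left, hiuu]
  set s : ℝ := Real.sqrt (1 - ‖u‖ ^ 2) with hsdef
  have h1s : 0 < 1 + s := by linarith
  set s' : ℝ := Real.sqrt (1 - ‖c • u‖ ^ 2) with hs'def
  have hs'2 : s' ^ 2 = 1 - c ^ 2 * ‖u‖ ^ 2 := by
    rw [hs'def, Real.sq_sqrt (by nlinarith [norm_nonneg (c • u)])]
    rw [norm_smul, Real.norm_eq_abs, mul_pow, sq_abs]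
  have hs'0 : 0 ≤ s' := Real.sqrt_nonneg _
  have h1s' : 0 < 1 + s' := by linarith
  constructor
  · rw [eAdd_eq, ← hsdef, hicu, smul_smul, ← add_smul]
    have hr : ‖u‖ ^ 2 = 1 - s ^ 2 := by linarith
    congr 1
    field_simp
    linear_combination c * hr
  · rw [eAdd_eq, ← hs'def, hiuc, smul_smul, ← add_smul]
    have hrel : c ^ 2 * ‖u‖ ^ 2 = 1 - s' ^ 2 := by linarith
    congr 1
    field_simp
    linear_combination hrel

lemma eAdd_comm_iff {u v : EuclideanSpace ℝ (Fin n)} (hu : ‖u‖ < 1) (hv : ‖v‖ < 1) :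
    eAdd u v = eAdd v u ↔ (u = 0 ∨ ∃ c : ℝ, v = c • u) := by
  constructor
  · intro h
    by_contra hcon
    push_neg at hcon
    obtain ⟨hu0, hc⟩ := hcon
    set t : ℝ := inner ℝ u v with htdef
    have htvu : (inner ℝ v u : ℝ) = t := by rw [real_inner_comm]
    have ht : |t| < 1 := inner_lt_one' hu hv
    have h1t : 0 < 1 + t := by cases abs_lt.mp ht; linarith
    set a : ℝ := Real.sqrt (1 - ‖u‖ ^ 2) with hadef
    set b : ℝ := Real.sqrt (1 - ‖v‖ ^ 2) with hbdef
    have ha2 : a ^ 2 = 1 - ‖u‖ ^ 2 := Real.sq_sqrt (by nlinarith [norm_nonneg u])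
    have hb2 : b ^ 2 = 1 - ‖v‖ ^ 2 := Real.sq_sqrt (by nlinarith [norm_nonneg v])
    have ha0 : 0 ≤ a := Real.sqrt_nonneg _
    have hb0 : 0 ≤ b := Real.sqrt_nonneg _
    have h1a : (0:ℝ) < 1 + a := by linarith
    have h1b : (0:ℝ) < 1 + b := by linarith
    rw [eAdd_eq, eAdd_eq, htvu, ← htdef, ← hadef, ← hbdef] at h
    set A : ℝ := (1 / (1 + t)) * (1 + t / (1 + a)) with hA
    set B : ℝ := (1 / (1 + t)) * a with hB
    set A' : ℝ := (1 / (1 + t)) * (1 + t / (1 + b)) with hA'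
    set B' : ℝ := (1 / (1 + t)) * b with hB'
    have h2 : (A - B') • u = (A' - B) • v := by
      rw [sub_smul, sub_smul, sub_eq_sub_iff_add_eq_add, h]
    rcases eq_or_ne (A' - B) 0 with hz | hz
    · rw [hz, zero_smul] at h2
      have hAB' : A = B' := by
        have := smul_eq_zero.mp h2
        rcases this with h' | h'
        · linarith [sub_eq_zero.mp (by linarith [h'] : A - B' = 0)]
        · exact absurd h' hu0
      have e1 : 1 + t / (1 + b) = a := by
        have : A' = B := by linarith [sub_eq_zero.mp hz]
        rw [hA', hB] at this
        have h1t' : (1:ℝ)/(1+t) ≠ 0 := by positivity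
        exact mul_left_cancel₀ h1t' this
      have e2 : 1 + t / (1 + a) = b := by
        rw [hA, hB'] at hAB'
        have h1t' : (1:ℝ)/(1+t) ≠ 0 := by positivity
        exact mul_left_cancel₀ h1t' hAB'
      have e1' : (1 + b) + t = a * (1 + b) := by
        have hb' : (1 + b) ≠ 0 := ne_of_gt h1b
        field_simp at e1
        linarith [e1]
      have e2' : (1 + a) + t = b * (1 + a) := by
        have ha' : (1 + a) ≠ 0 := ne_of_gt h1a
        field_simp at e2
        linarith [e2]
      have hab : a = b := by linear_combination (e2' - e1') / 2
      rw [← hab] at e2'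
      rw [hab] at e1'
      have htu : t = -‖u‖ ^ 2 := by linear_combination e2' + ha2
      have htv : t = -‖v‖ ^ 2 := by linear_combination e1' + hb2
      have hsum : ‖u + v‖ ^ 2 = 0 := by
        rw [← real_inner_self_eq_norm_sq]
        simp only [inner_add_left, inner_add_right, real_inner_self_eq_norm_sq, htvu, ← htdef]
        linarith [htu, htv]
      have huv : u + v = 0 := by
        rw [← norm_eq_zero]
        exact (pow_eq_zero_iff two_ne_zero).mp hsum
      refine hc (-1) ?_
      rw [neg_one_smul]
      exact eq_neg_of_add_eq_zero_right huv
    · have h3 := congrArg (fun w : EuclideanSpace ℝ (Fin n) => (A' - B)⁻¹ • w) h2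
      simp only [smul_smul] at h3
      rw [inv_mul_cancel₀ hz, one_smul] at h3
      exact hc ((A' - B)⁻¹ * (A - B')) h3.symm
  · rintro (rfl | ⟨c, rfl⟩)
    · simp [eAdd]
    · obtain ⟨h1, h2⟩ := eAdd_smul_self hu hv
      rw [h1, h2]

noncomputable def eT (x w : EuclideanSpace ℝ (Fin n)) : EuclideanSpace ℝ (Fin n) :=
  Real.sqrt (1 - ‖x‖ ^ 2) • w + (((inner ℝ x w : ℝ)) / (1 + Real.sqrt (1 - ‖x‖ ^ 2))) • x

lemma eT_zero (x : EuclideanSpace ℝ (Fin n)) : eT x 0 = 0 := by simp [eT]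

lemma eT_smul (x w : EuclideanSpace ℝ (Fin n)) (c : ℝ) : eT x (c • w) = c • eT x w := by
  simp only [eT, real_inner_smul_right, smul_add, smul_smul]
  match_scalars <;> ring

lemma eT_sub (x a b : EuclideanSpace ℝ (Fin n)) : eT x (a - b) = eT x a - eT x b := by
  simp only [eT, inner_sub_right]
  match_scalars <;> ring

lemma eT_inj {x w : EuclideanSpace ℝ (Fin n)} (hx : ‖x‖ < 1) (h : eT x w = 0) : w = 0 := by
  set s : ℝ := Real.sqrt (1 - ‖x‖ ^ 2) with hsdef
  have hs2 : s ^ 2 = 1 - ‖x‖ ^ 2 := Real.sq_sqrt (by nlinarith [norm_nonneg x])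
  have hs0 : 0 < s := by
    rw [hsdef]
    exact Real.sqrt_pos.mpr (by nlinarith [norm_nonneg x])
  have h1s : (0:ℝ) < 1 + s := by linarith
  have hin : (inner ℝ (eT x w) w : ℝ) = 0 := by rw [h, inner_zero_left]
  rw [eT, inner_add_left, real_inner_smul_left, real_inner_smul_left, ← hsdef,
    real_inner_self_eq_norm_sq] at hin
  have hrw : (inner ℝ x w : ℝ) / (1 + s) * (inner ℝ x w : ℝ) = (inner ℝ x w : ℝ)^2 / (1 + s) := by
    ring
  rw [hrw] at hin
  have hw2 : ‖w‖ ^ 2 = 0 := by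
    nlinarith [div_nonneg (sq_nonneg (inner ℝ x w : ℝ)) h1s.le, sq_nonneg ‖w‖,
      mul_nonneg hs0.le (sq_nonneg ‖w‖)]
  rw [← norm_eq_zero]
  exact (pow_eq_zero_iff two_ne_zero).mp hw2

lemma eAdd_neg {x y : EuclideanSpace ℝ (Fin n)} (hx : ‖x‖ < 1) :
    eAdd (-x) y = (1 / (1 - (inner ℝ x y : ℝ))) • eT x (y - x) := by
  have hs2 : Real.sqrt (1 - ‖x‖ ^ 2) ^ 2 = 1 - ‖x‖ ^ 2 :=
    Real.sq_sqrt (by nlinarith [norm_nonneg x])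
  have hs0 : 0 ≤ Real.sqrt (1 - ‖x‖ ^ 2) := Real.sqrt_nonneg _
  have h1s : (0:ℝ) < 1 + Real.sqrt (1 - ‖x‖ ^ 2) := by linarith
  have hx2 : ‖x‖ ^ 2 = 1 - Real.sqrt (1 - ‖x‖ ^ 2) ^ 2 := by linarith
  rw [eAdd, eT]
  simp only [inner_neg_left, norm_neg, inner_sub_right, real_inner_self_eq_norm_sq]
  rw [hx2]
  match_scalars
  · field_simp
    rw [sub_sub_cancel, Real.sqrt_sq hs0]
    ring
  · field_simp
    ring

lemma collinear_triple_iff (x y z : EuclideanSpace ℝ (Fin n)) :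
    Collinear ℝ ({x, y, z} : Set (EuclideanSpace ℝ (Fin n))) ↔
      (y - x = 0 ∨ ∃ c : ℝ, z - x = c • (y - x)) := by
  rw [collinear_iff_of_mem (Set.mem_insert x {y, z})]
  constructor
  · rintro ⟨v, hv⟩
    obtain ⟨r, hy⟩ := hv y (by simp)
    obtain ⟨r', hz⟩ := hv z (by simp)
    rcases eq_or_ne r 0 with hr | hr
    · left
      rw [hy, hr, zero_smul, vadd_eq_add, zero_add, sub_self]
    · right
      refine ⟨r'/r, ?_⟩
      rw [hy, hz, vadd_eq_add, vadd_eq_add, add_sub_cancel_right, add_sub_cancel_right,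
        smul_smul, div_mul_cancel₀ _ hr]
  · rintro (h | ⟨c, h⟩)
    · refine ⟨z - x, fun p hp => ?_⟩
      rcases hp with rfl | rfl | rfl
      · exact ⟨0, by simp⟩
      · exact ⟨0, by simp [sub_eq_zero.mp h]⟩
      · exact ⟨1, by simp⟩
    · refine ⟨y - x, fun p hp => ?_⟩
      rcases hp with rfl | rfl | rfl
      · exact ⟨0, by simp⟩
      · exact ⟨1, by simp⟩
      · exact ⟨c, by rw [vadd_eq_add, ← h]; abel⟩

end Aux

theorem stmt_6 {n : ℕ} (x y z : EuclideanSpace ℝ (Fin n))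
    (hx : x ∈ eBall n) (hy : y ∈ eBall n) (hz : z ∈ eBall n) :
    Collinear ℝ ({x, y, z} : Set (EuclideanSpace ℝ (Fin n))) ↔
      eAdd (eAdd (-x) y) (eAdd (-x) z) = eAdd (eAdd (-x) z) (eAdd (-x) y) := by
  rw [eBall, mem_ball_zero_iff] at hx hy hz
  have hnx : ‖(-x)‖ < 1 := by rwa [norm_neg]
  have hu : ‖eAdd (-x) y‖ < 1 := eAdd_norm_lt hnx hy
  have hv : ‖eAdd (-x) z‖ < 1 := eAdd_norm_lt hnx hz
  rw [eAdd_comm_iff hu hv, collinear_triple_iff]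
  set ty : ℝ := inner ℝ x y with htydef
  set tz : ℝ := inner ℝ x z with htzdef
  have hty : |ty| < 1 := inner_lt_one' hx hy
  have htz : |tz| < 1 := inner_lt_one' hx hz
  have hcy : (1 : ℝ) - ty ≠ 0 := by cases abs_lt.mp hty; intro h; linarith
  have hcz : (1 : ℝ) - tz ≠ 0 := by cases abs_lt.mp htz; intro h; linarith
  have fy : eAdd (-x) y = (1/(1-ty)) • eT x (y-x) := eAdd_neg hx
  have fz : eAdd (-x) z = (1/(1-tz)) • eT x (z-x) := eAdd_neg hx
  constructor
  · rintro (h0 | ⟨c, hc⟩)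
    · left
      rw [fy, h0, eT_zero, smul_zero]
    · right
      refine ⟨c * (1-ty) / (1-tz), ?_⟩
      rw [fz, hc, eT_smul, fy, smul_smul, smul_smul]
      congr 1
      field_simp
  · rintro (h0 | ⟨c, hc⟩)
    · left
      rw [fy] at h0
      rcases smul_eq_zero.mp h0 with h' | h'
      · exact absurd h' (by simp [hcy])
      · exact eT_inj hx h'
    · right
      refine ⟨c * (1-tz) / (1-ty), ?_⟩
      rw [fy, fz, smul_smul] at hc
      have h3 := congrArg (fun w : EuclideanSpace ℝ (Fin n) => (1 - tz) • w) hc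
      simp only [smul_smul] at h3
      have hl : (1 - tz) * (1/(1-tz)) = 1 := by field_simp
      have hr : (1 - tz) * (c * (1/(1-ty))) = c * (1-tz) / (1-ty) := by
        field_simp
      rw [hl, one_smul, hr] at h3
      have h4 : eT x ((z - x) - (c * (1-tz) / (1-ty)) • (y - x)) = 0 := by
        rw [eT_sub, eT_smul, h3, sub_self]
      have h5 := eT_inj hx h4
      rw [sub_eq_zero] at h5
      exact h5
end

section
/- If f : B^n → B^n is a continuous endomorphism of the Einstein gyrogroup and f(x) = 0 for some x ≠ 0, then f vanishes on the entire diameter through x, i.e., f(s·x/|x|) = 0 for all s ∈ (−1,1). -/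
-- tanh in terms of exp(2r)
lemma tanh_exp (r : ℝ) : Real.tanh r = (Real.exp (2*r) - 1) / (Real.exp (2*r) + 1) := by
  have h1 : Real.exp (2*r) = Real.exp r * Real.exp r := by rw [two_mul, Real.exp_add]
  have h2 : Real.exp r + Real.exp (-r) ≠ 0 := by positivity
  have h3 : Real.exp r * Real.exp r + 1 ≠ 0 := by positivity
  rw [Real.tanh_eq_sinh_div_cosh, Real.sinh_eq, Real.cosh_eq, h1, Real.exp_neg]
  have h4 : Real.exp r ≠ 0 := Real.exp_ne_zero r
  field_simp

lemma tanh_mem (r : ℝ) : Real.tanh r ∈ Set.Ioo (-1 : ℝ) 1 := by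
  rw [tanh_exp]
  have h : 0 < Real.exp (2*r) := Real.exp_pos _
  constructor
  · rw [lt_div_iff₀ (by linarith)]; linarith
  · rw [div_lt_iff₀ (by linarith)]; linarith

lemma tanh_add' (a b : ℝ) :
    Real.tanh (a + b) = (Real.tanh a + Real.tanh b) / (1 + Real.tanh a * Real.tanh b) := by
  have ha : Real.exp (2*a) > 0 := Real.exp_pos _
  have hb : Real.exp (2*b) > 0 := Real.exp_pos _
  have hab : Real.exp (2*(a+b)) = Real.exp (2*a) * Real.exp (2*b) := by
    rw [← Real.exp_add]; ring_nf
  have h1 : Real.exp (2*a) + 1 ≠ 0 := by positivity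
  have h2 : Real.exp (2*b) + 1 ≠ 0 := by positivity
  have h3 : Real.exp (2*a) * Real.exp (2*b) + 1 ≠ 0 := by positivity
  have h4 : 1 + (Real.exp (2*a) - 1) / (Real.exp (2*a) + 1) * ((Real.exp (2*b) - 1) / (Real.exp (2*b) + 1)) ≠ 0 := by
    have heq : 1 + (Real.exp (2*a) - 1) / (Real.exp (2*a) + 1) * ((Real.exp (2*b) - 1) / (Real.exp (2*b) + 1))
        = 2 * (Real.exp (2*a) * Real.exp (2*b) + 1) / ((Real.exp (2*a) + 1) * (Real.exp (2*b) + 1)) := by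
      field_simp
      ring
    rw [heq]
    positivity
  have h4' : 1 + Real.tanh a * Real.tanh b ≠ 0 := by
    rw [tanh_exp a, tanh_exp b]; exact h4
  rw [eq_div_iff h4', tanh_exp, tanh_exp, tanh_exp, hab]
  field_simp
  ring

lemma eAdd_zero_zero {n : ℕ} : eAdd (0 : EuclideanSpace ℝ (Fin n)) 0 = 0 := by
  simp [eAdd]

lemma eAdd_self {n : ℕ} (u : EuclideanSpace ℝ (Fin n)) (hu : ‖u‖ < 1) :
    eAdd u u = (2 / (1 + ‖u‖ ^ 2)) • u := by
  have hinner : (inner ℝ u u : ℝ) = ‖u‖ ^ 2 := real_inner_self_eq_norm_sq u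
  have ht0 : (0 : ℝ) ≤ ‖u‖ ^ 2 := sq_nonneg _
  have ht1 : ‖u‖ ^ 2 ≤ 1 := by nlinarith [norm_nonneg u]
  set s := Real.sqrt (1 - ‖u‖ ^ 2) with hs
  have hs0 : 0 ≤ s := Real.sqrt_nonneg _
  have hs2 : s ^ 2 = 1 - ‖u‖ ^ 2 := Real.sq_sqrt (by linarith)
  have h1t : (1 : ℝ) + ‖u‖ ^ 2 ≠ 0 := by positivity
  have h1s : (1 : ℝ) + s ≠ 0 := by positivity
  rw [eAdd, hinner, ← hs]
  rw [smul_add, smul_add, smul_smul, smul_smul]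
  rw [← add_smul, ← add_smul]
  congr 1
  field_simp
  linear_combination hs2

lemma eAdd_smul {n : ℕ} (e : EuclideanSpace ℝ (Fin n)) (he : ‖e‖ = 1) (a b : ℝ)
    (ha : a ∈ Set.Ioo (-1 : ℝ) 1) (hb : b ∈ Set.Ioo (-1 : ℝ) 1) :
    eAdd (a • e) (b • e) = ((a + b) / (1 + a * b)) • e := by
  have hinner : (inner ℝ (a • e) (b • e) : ℝ) = a * b := by
    rw [real_inner_smul_left, real_inner_smul_right, real_inner_self_eq_norm_sq, he]
    ring
  have hnorm : ‖a • e‖ ^ 2 = a ^ 2 := by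
    rw [norm_smul, he]; simp [mul_pow, sq_abs]
  have ha2 : a ^ 2 ≤ 1 := by nlinarith [ha.1, ha.2]
  set s := Real.sqrt (1 - a ^ 2) with hs
  have hs0 : 0 ≤ s := Real.sqrt_nonneg _
  have hs2 : s ^ 2 = 1 - a ^ 2 := Real.sq_sqrt (by linarith)
  have h1s : (1 : ℝ) + s ≠ 0 := by positivity
  have hab : (1 : ℝ) + a * b ≠ 0 := by nlinarith [ha.1, ha.2, hb.1, hb.2]
  rw [eAdd, hinner, hnorm, ← hs]
  rw [smul_smul, smul_smul, smul_add, smul_add, smul_smul, smul_smul, smul_smul,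
    ← add_smul, ← add_smul]
  congr 1
  field_simp
  linear_combination b * hs2

/-- artanh -/
noncomputable def artanh (x : ℝ) : ℝ := Real.log ((1 + x) / (1 - x)) / 2

lemma tanh_artanh {x : ℝ} (hx : x ∈ Set.Ioo (-1 : ℝ) 1) : Real.tanh (artanh x) = x := by
  obtain ⟨h1, h2⟩ := hx
  have hpos : 0 < (1 + x) / (1 - x) := by
    apply div_pos <;> linarith
  have hE : Real.exp (2 * artanh x) = (1 + x) / (1 - x) := by
    rw [artanh]
    rw [show 2 * (Real.log ((1 + x) / (1 - x)) / 2) = Real.log ((1 + x) / (1 - x)) by ring]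
    exact Real.exp_log hpos
  rw [tanh_exp, hE]
  have h1x : (1 : ℝ) - x ≠ 0 := by linarith
  field_simp
  ring

theorem stmt_13 {n : ℕ} (f : EuclideanSpace ℝ (Fin n) → EuclideanSpace ℝ (Fin n))
    (hmaps : Set.MapsTo f (eBall n) (eBall n))
    (hcont : ContinuousOn f (eBall n))
    (hhom : ∀ u ∈ eBall n, ∀ v ∈ eBall n, f (eAdd u v) = eAdd (f u) (f v))
    (x : EuclideanSpace ℝ (Fin n)) (hx : x ∈ eBall n) (hx0 : x ≠ 0) (hfx : f x = 0) :
    ∀ s ∈ Set.Ioo (-1 : ℝ) 1, f ((s * ‖x‖⁻¹) • x) = 0 := by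
  have hxn : ‖x‖ < 1 := by
    simpa [eBall, dist_zero_right] using hx
  have hxp : 0 < ‖x‖ := norm_pos_iff.mpr hx0
  set e : EuclideanSpace ℝ (Fin n) := ‖x‖⁻¹ • x with he_def
  have he : ‖e‖ = 1 := by
    rw [he_def, norm_smul, norm_inv, norm_norm, inv_mul_cancel₀ (ne_of_gt hxp)]
  -- membership of s • e in the ball
  have hmem : ∀ a : ℝ, a ∈ Set.Ioo (-1 : ℝ) 1 → a • e ∈ eBall n := by
    intro a ha
    simp only [eBall, Metric.mem_ball, dist_zero_right, norm_smul, he, mul_one]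
    exact abs_lt.mpr ⟨ha.1, ha.2⟩
  -- key: f 0 = 0
  have h0mem : (0 : EuclideanSpace ℝ (Fin n)) ∈ eBall n := by
    simp [eBall]
  have hf0 : f 0 = 0 := by
    have h1 := hhom 0 h0mem 0 h0mem
    rw [eAdd_zero_zero] at h1
    have hfb : ‖f 0‖ < 1 := by
      simpa [eBall, dist_zero_right] using hmaps h0mem
    rw [eAdd_self (f 0) hfb] at h1
    have key : ((2 / (1 + ‖f 0‖ ^ 2)) - 1) • f 0 = 0 := by
      rw [sub_smul, one_smul, ← h1, sub_self]
    rcases smul_eq_zero.mp key with h | h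
    · exfalso
      have hden : (0:ℝ) < 1 + ‖f 0‖ ^ 2 := by positivity
      have h2 : 2 / (1 + ‖f 0‖ ^ 2) = 1 := by linarith [sub_eq_zero.mp h]
      rw [div_eq_one_iff_eq hden.ne'] at h2
      nlinarith [norm_nonneg (f 0)]
    · exact h
  -- the function w
  set w : ℝ → EuclideanSpace ℝ (Fin n) := fun r => f (Real.tanh r • e) with hw_def
  have hw0 : w 0 = 0 := by
    simp only [hw_def, Real.tanh_zero, zero_smul]
    exact hf0
  -- additivity in image
  have hwadd : ∀ r₁ r₂ : ℝ, w (r₁ + r₂) = eAdd (w r₁) (w r₂) := by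
    intro r₁ r₂
    have h1 : Real.tanh (r₁ + r₂) • e = eAdd (Real.tanh r₁ • e) (Real.tanh r₂ • e) := by
      rw [eAdd_smul e he _ _ (tanh_mem r₁) (tanh_mem r₂), tanh_add']
    simp only [hw_def]
    rw [h1]
    exact hhom _ (hmem _ (tanh_mem r₁)) _ (hmem _ (tanh_mem r₂))
  -- K as a subgroup
  have hK_add : ∀ r₁ r₂ : ℝ, w r₁ = 0 → w r₂ = 0 → w (r₁ + r₂) = 0 := by
    intro r₁ r₂ h1 h2
    rw [hwadd, h1, h2, eAdd_zero_zero]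
  have hK_neg : ∀ r : ℝ, w r = 0 → w (-r) = 0 := by
    intro r h1
    have := hwadd r (-r)
    rw [add_neg_cancel, hw0, h1, eAdd_zero_left] at this
    exact this.symm
  have hK_half : ∀ r : ℝ, w (2 * r) = 0 → w r = 0 := by
    intro r h1
    have h2 : w (r + r) = 0 := by rw [← two_mul]; exact h1
    rw [hwadd] at h2
    have hwb : ‖w r‖ < 1 := by
      simpa [eBall, dist_zero_right] using hmaps (hmem _ (tanh_mem r))
    rw [eAdd_self (w r) hwb] at h2
    rcases smul_eq_zero.mp h2 with h | h
    · exfalso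
      have hp : (0:ℝ) < 2 / (1 + ‖w r‖ ^ 2) := by positivity
      exact hp.ne' h
    · exact h
  -- K contains artanh ‖x‖
  have hxIoo : ‖x‖ ∈ Set.Ioo (-1 : ℝ) 1 := ⟨by linarith, hxn⟩
  have ha0 : w (artanh ‖x‖) = 0 := by
    simp only [hw_def, tanh_artanh hxIoo]
    rw [he_def, smul_smul, mul_inv_cancel₀ (ne_of_gt hxp), one_smul]
    exact hfx
  have haneq : artanh ‖x‖ ≠ 0 := by
    intro h
    have := tanh_artanh hxIoo
    rw [h, Real.tanh_zero] at this
    exact hxp.ne this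
  -- the subgroup
  set K : AddSubgroup ℝ :=
    { carrier := {r | w r = 0}
      zero_mem' := hw0
      add_mem' := fun h1 h2 => hK_add _ _ h1 h2
      neg_mem' := fun h => hK_neg _ h } with hK_def
  -- dyadic halving members
  have hK_dyadic : ∀ m : ℕ, w (artanh ‖x‖ / 2 ^ m) = 0 := by
    intro m
    induction m with
    | zero => simpa using ha0
    | succ k ih =>
      apply hK_half
      rw [show 2 * (artanh ‖x‖ / 2 ^ (k+1)) = artanh ‖x‖ / 2 ^ k by
        rw [pow_succ]; field_simp]
      exact ih
  -- density
  have hdense : Dense (K : Set ℝ) := by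
    apply AddSubgroup.dense_of_not_isolated_zero
    intro ε hε
    set a := |artanh ‖x‖| with ha_def
    have hap : 0 < a := abs_pos.mpr haneq
    obtain ⟨m, hm⟩ := exists_pow_lt_of_lt_one (div_pos hε hap) (by norm_num : (1:ℝ)/2 < 1)
    refine ⟨a / 2 ^ m, ?_, ?_, ?_⟩
    · -- a / 2 ^ m ∈ K
      rcases abs_cases (artanh ‖x‖) with ⟨h, _⟩ | ⟨h, _⟩
      · rw [ha_def, h]; exact hK_dyadic m
      · rw [ha_def, h, neg_div]
        exact hK_neg _ (hK_dyadic m)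
    · positivity
    · calc a / 2 ^ m = a * (1/2) ^ m := by rw [div_pow, one_pow]; ring
        _ < a * (ε / a) := by
            exact mul_lt_mul_of_pos_left hm hap
        _ = ε := by field_simp
  -- closedness
  have hcl : IsClosed {r : ℝ | w r = 0} := by
    have hwc : Continuous w := by
      have h1 : Continuous fun r : ℝ => Real.tanh r • e := by
        apply Continuous.fun_smul _ continuous_const
        have : Real.tanh = fun r => Real.sinh r / Real.cosh r := by
          funext r; exact Real.tanh_eq_sinh_div_cosh r
        rw [this]
        exact Real.continuous_sinh.div Real.continuous_cosh fun r => (Real.cosh_pos r).ne'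
      exact (hcont.comp_continuous h1 fun r => hmem _ (tanh_mem r))
    exact isClosed_eq hwc continuous_const
  have hall : ∀ r : ℝ, w r = 0 := by
    have h1 : closure (K : Set ℝ) = Set.univ := hdense.closure_eq
    have h2 : closure (K : Set ℝ) = (K : Set ℝ) := hcl.closure_eq
    intro r
    have : r ∈ (K : Set ℝ) := by rw [← h2, h1]; trivial
    exact this
  -- conclude
  intro s hs
  have := hall (artanh s)
  simp only [hw_def, tanh_artanh hs] at this
  rw [he_def, smul_smul] at this
  exact this
end

section
/- Every neighbourhood of 0 in the open unit ball generates the whole ball under Einstein addition: for any ε > 0 and any v ∈ B^n there exist finitely many elements of {u ∈ B^n : |u| < ε} whose iterated Einstein sum (in some bracketing) equals v. -/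
lemma eAdd_double {n : ℕ} (w : EuclideanSpace ℝ (Fin n)) (hw : ‖w‖ = 1) (a : ℝ)
    (ha : 0 ≤ a) (ha1 : a ≤ 1) :
    eAdd (a • w) (a • w) = (2 * a / (1 + a ^ 2)) • w := by
  have hinner : (inner ℝ (a • w) (a • w) : ℝ) = a ^ 2 := by
    rw [real_inner_smul_left, real_inner_smul_right, real_inner_self_eq_norm_sq, hw]
    ring
  have hnorm : ‖a • w‖ = a := by
    rw [norm_smul, hw, Real.norm_eq_abs, abs_of_nonneg ha, mul_one]
  have hs : Real.sqrt (1 - a ^ 2) ^ 2 = 1 - a ^ 2 := by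
    rw [Real.sq_sqrt]; nlinarith
  have hsnn : 0 ≤ Real.sqrt (1 - a ^ 2) := Real.sqrt_nonneg _
  set s := Real.sqrt (1 - a ^ 2) with hsdef
  unfold eAdd
  rw [hinner, hnorm, smul_smul, smul_smul, ← add_smul, ← add_smul, smul_smul]
  congr 1
  have h1 : (0:ℝ) < 1 + s := by linarith
  have h2 : (0:ℝ) < 1 + a ^ 2 := by positivity
  field_simp
  linear_combination a * (Real.sq_sqrt (show (0:ℝ) ≤ 1 - a ^ 2 by nlinarith))

noncomputable def halfSeq (r : ℝ) : ℕ → ℝ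
  | 0 => r
  | m + 1 => halfSeq r m / (1 + Real.sqrt (1 - (halfSeq r m) ^ 2))

lemma halfSeq_nonneg (r : ℝ) (hr : 0 ≤ r) : ∀ m, 0 ≤ halfSeq r m := by
  intro m
  induction m with
  | zero => exact hr
  | succ m ih =>
    have : (0:ℝ) < 1 + Real.sqrt (1 - (halfSeq r m) ^ 2) := by
      have := Real.sqrt_nonneg (1 - (halfSeq r m) ^ 2); linarith
    exact div_nonneg ih this.le

lemma halfSeq_le (r : ℝ) (hr : 0 ≤ r) : ∀ m, halfSeq r m ≤ r := by
  intro m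
  induction m with
  | zero => exact le_rfl
  | succ m ih =>
    have h0 := halfSeq_nonneg r hr m
    have h1 : (0:ℝ) < 1 + Real.sqrt (1 - (halfSeq r m) ^ 2) := by
      have := Real.sqrt_nonneg (1 - (halfSeq r m) ^ 2); linarith
    calc halfSeq r (m+1) = halfSeq r m / (1 + Real.sqrt (1 - (halfSeq r m) ^ 2)) := rfl
      _ ≤ halfSeq r m := div_le_self h0 (le_add_of_nonneg_right (Real.sqrt_nonneg _))
      _ ≤ r := ih

lemma halfSeq_double (r : ℝ) (hr : 0 ≤ r) (hr1 : r ≤ 1) (m : ℕ) :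
    2 * halfSeq r (m+1) / (1 + (halfSeq r (m+1)) ^ 2) = halfSeq r m := by
  set b := halfSeq r m with hb
  have hb0 : 0 ≤ b := halfSeq_nonneg r hr m
  have hb1 : b ≤ 1 := le_trans (halfSeq_le r hr m) hr1
  have hs : Real.sqrt (1 - b ^ 2) ^ 2 = 1 - b ^ 2 := by
    rw [Real.sq_sqrt]; nlinarith
  set s := Real.sqrt (1 - b ^ 2) with hsdef
  have hsnn : 0 ≤ s := Real.sqrt_nonneg _
  have h1 : (0:ℝ) < 1 + s := by linarith
  have hval : halfSeq r (m+1) = b / (1 + s) := rfl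
  rw [hval]
  have hden : (0:ℝ) < 1 + (b / (1+s))^2 := by positivity
  field_simp
  linear_combination (-b) * hs

lemma halfSeq_decay (r : ℝ) (hr : 0 ≤ r) (hr1 : r < 1) (m : ℕ) :
    halfSeq r m ≤ r * (1 / (1 + Real.sqrt (1 - r ^ 2))) ^ m := by
  have hrs : 0 < Real.sqrt (1 - r ^ 2) := Real.sqrt_pos.mpr (by nlinarith)
  set q := 1 / (1 + Real.sqrt (1 - r ^ 2)) with hq
  have hq0 : 0 < q := by positivity
  induction m with
  | zero => simp [halfSeq]
  | succ m ih =>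
    set c := halfSeq r m with hc
    have hc0 : 0 ≤ c := halfSeq_nonneg r hr m
    have hcr : c ≤ r := halfSeq_le r hr m
    have hmono : Real.sqrt (1 - r ^ 2) ≤ Real.sqrt (1 - c ^ 2) :=
      Real.sqrt_le_sqrt (by nlinarith)
    have h1 : (0:ℝ) < 1 + Real.sqrt (1 - r ^ 2) := by linarith
    have h2 : (0:ℝ) < 1 + Real.sqrt (1 - c ^ 2) := by linarith
    calc halfSeq r (m+1) = c / (1 + Real.sqrt (1 - c ^ 2)) := rfl
      _ ≤ c / (1 + Real.sqrt (1 - r ^ 2)) := by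
          gcongr
      _ = c * q := by rw [hq, div_eq_mul_one_div]
      _ ≤ (r * q ^ m) * q := by
          apply mul_le_mul_of_nonneg_right ih hq0.le
      _ = r * q ^ (m + 1) := by ring

theorem stmt_15 {n : ℕ} (ε : ℝ) (hε : 0 < ε) (v : EuclideanSpace ℝ (Fin n))
    (hv : v ∈ eBall n) (S : Set (EuclideanSpace ℝ (Fin n)))
    (hsub : {u | u ∈ eBall n ∧ ‖u‖ < ε} ⊆ S)
    (hclosed : ∀ a ∈ S, ∀ b ∈ S, eAdd a b ∈ S) :
    v ∈ S := by
  have hr1 : ‖v‖ < 1 := by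
    simpa [eBall, mem_ball_zero_iff] using hv
  by_cases hv0 : v = 0
  · apply hsub
    refine ⟨?_, ?_⟩
    · simpa [eBall] using hv
    · simpa [hv0] using hε
  · set r := ‖v‖ with hrdef
    have hr0 : 0 < r := norm_pos_iff.mpr hv0
    set w : EuclideanSpace ℝ (Fin n) := r⁻¹ • v with hwdef
    have hw : ‖w‖ = 1 := by
      rw [hwdef, norm_smul, norm_inv, norm_norm, ← hrdef, inv_mul_cancel₀ hr0.ne']
    have key : ∀ m, halfSeq r m • w ∈ S → v ∈ S := by
      intro m
      induction m with
      | zero =>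
        intro h
        have : halfSeq r 0 • w = v := by
          show r • (r⁻¹ • v) = v
          rw [smul_smul, mul_inv_cancel₀ hr0.ne', one_smul]
        rwa [this] at h
      | succ m ih =>
        intro h
        apply ih
        have hc0 : 0 ≤ halfSeq r (m+1) := halfSeq_nonneg r hr0.le _
        have hc1 : halfSeq r (m+1) ≤ 1 := (halfSeq_le r hr0.le _).trans hr1.le
        have h2 := hclosed _ h _ h
        rwa [eAdd_double w hw _ hc0 hc1, halfSeq_double r hr0.le hr1.le m] at h2
    -- find m with halfSeq r m < ε
    have hrs : 0 < Real.sqrt (1 - r ^ 2) := Real.sqrt_pos.mpr (by nlinarith)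
    set q := 1 / (1 + Real.sqrt (1 - r ^ 2)) with hq
    have hq0 : 0 < q := by positivity
    have hq1 : q < 1 := by
      rw [hq, div_lt_one (by linarith)]; linarith
    obtain ⟨m, hm⟩ := exists_pow_lt_of_lt_one hε hq1
    have hsmall : halfSeq r m < ε :=
      lt_of_le_of_lt ((halfSeq_decay r hr0.le hr1 m).trans
        (by nlinarith [pow_nonneg hq0.le m])) hm
    apply key m
    apply hsub
    have hnorm : ‖halfSeq r m • w‖ = halfSeq r m := by
      rw [norm_smul, hw, Real.norm_eq_abs, abs_of_nonneg (halfSeq_nonneg r hr0.le m), mul_one]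
    refine ⟨?_, ?_⟩
    · simp only [eBall, mem_ball_zero_iff, hnorm]
      exact lt_of_le_of_lt (halfSeq_le r hr0.le m) hr1
    · rw [hnorm]; exact hsmall
end

section
/- For n ≥ 2, every automorphism of the Einstein gyrogroup (B^n, ⊕) is continuous (indeed, the restriction of a linear isometry of ℝⁿ). -/
set_option maxHeartbeats 1000000

open scoped RealInnerProductSpace

namespace EPf

variable {n : ℕ}

local notation "E" => EuclideanSpace ℝ (Fin n)

lemma mem_eBall {u : E} : u ∈ eBall n ↔ ‖u‖ < 1 := by
  simp [eBall, mem_ball_zero_iff]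

lemma inner_abs_lt {u v : E} (hu : ‖u‖ < 1) (hv : ‖v‖ < 1) : |⟪u,v⟫| < 1 := by
  have h := abs_real_inner_le_norm u v
  nlinarith [norm_nonneg u, norm_nonneg v]

lemma one_add_inner_pos {u v : E} (hu : ‖u‖ < 1) (hv : ‖v‖ < 1) : 0 < 1 + ⟪u,v⟫ := by
  have h := (abs_lt.1 (inner_abs_lt hu hv)).1
  linarith

lemma s_pos {u : E} (hu : ‖u‖ < 1) : 0 < Real.sqrt (1 - ‖u‖ ^ 2) := by
  apply Real.sqrt_pos.2
  nlinarith [norm_nonneg u]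

lemma s_sq {u : E} (hu : ‖u‖ < 1) : (Real.sqrt (1 - ‖u‖ ^ 2)) ^ 2 = 1 - ‖u‖ ^ 2 := by
  rw [Real.sq_sqrt]; nlinarith [norm_nonneg u]

lemma eAdd_closed_form (u v : E) :
    eAdd u v = ((1 + Real.sqrt (1 - ‖u‖ ^ 2) + ⟪u,v⟫) / ((1 + ⟪u,v⟫) * (1 + Real.sqrt (1 - ‖u‖ ^ 2)))) • u
      + (Real.sqrt (1 - ‖u‖ ^ 2) / (1 + ⟪u,v⟫)) • v := by
  unfold eAdd
  have h1 : (1:ℝ) + Real.sqrt (1 - ‖u‖ ^ 2) ≠ 0 := by positivity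
  by_cases h : (1:ℝ) + ⟪u,v⟫ = 0
  · rw [h]; simp
  · match_scalars <;> field_simp

lemma normsq_comb (u v : E) (a b : ℝ) :
    ‖a • u + b • v‖ ^ 2 = a^2*‖u‖^2 + 2*(a*b*⟪u,v⟫) + b^2*‖v‖^2 := by
  rw [norm_add_sq_real]
  simp [norm_smul, inner_smul_left, inner_smul_right, mul_pow]
  ring

lemma scalar_T (a b d s : ℝ) (hs2 : s^2 = 1-a) (hsp : 0 < s) (hd : 0 < 1+d) :
    (1 - (((1+s+d)/((1+d)*(1+s)))^2*a + 2*(((1+s+d)/((1+d)*(1+s)))*(s/(1+d))*d) + (s/(1+d))^2*b)) * (1+d)^2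
      = (1-a)*(1-b) := by
  have ha : a = 1 - s^2 := by linarith
  subst ha
  have h1 : (1:ℝ)+s ≠ 0 := by positivity
  have h2 : (1:ℝ)+d ≠ 0 := ne_of_gt hd
  field_simp
  ring

lemma gamma_sq_identity {u v : E} (hu : ‖u‖ < 1) (hv : ‖v‖ < 1) :
    (1 - ‖eAdd u v‖ ^ 2) * (1 + ⟪u,v⟫)^2 = (1 - ‖u‖^2) * (1 - ‖v‖^2) := by
  rw [eAdd_closed_form, normsq_comb]
  exact scalar_T _ _ _ _ (s_sq hu) (s_pos hu) (one_add_inner_pos hu hv)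

lemma norm_eAdd_lt {u v : E} (hu : ‖u‖ < 1) (hv : ‖v‖ < 1) : ‖eAdd u v‖ < 1 := by
  have h := gamma_sq_identity hu hv
  have hd := one_add_inner_pos hu hv
  have hrhs : 0 < (1 - ‖u‖^2) * (1 - ‖v‖^2) :=
    mul_pos (by nlinarith [norm_nonneg u]) (by nlinarith [norm_nonneg v])
  have hx : 0 < 1 - ‖eAdd u v‖ ^ 2 := by
    rcases le_or_gt (1 - ‖eAdd u v‖^2) 0 with hle|hlt
    · nlinarith [sq_nonneg (1+⟪u,v⟫)]
    · exact hlt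
  nlinarith [norm_nonneg (eAdd u v)]

lemma eAdd_mem {u v : E} (hu : u ∈ eBall n) (hv : v ∈ eBall n) : eAdd u v ∈ eBall n :=
  mem_eBall.2 (norm_eAdd_lt (mem_eBall.1 hu) (mem_eBall.1 hv))

/-- the Lorentz gamma factor of a point of the ball -/
noncomputable def gam (w : E) : ℝ := (Real.sqrt (1 - ‖w‖^2))⁻¹

lemma gam_eq_of_norm_eq {w w' : E} (h : ‖w‖ = ‖w'‖) : gam w = gam w' := by
  unfold gam; rw [h]

lemma one_le_gam {w : E} (hw : ‖w‖ < 1) : 1 ≤ gam w := by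
  rw [gam, le_inv_comm₀] <;>
  · try constructor
    all_goals nlinarith [s_pos hw, s_sq hw, Real.sqrt_nonneg (1 - ‖w‖^2), norm_nonneg w]

lemma gam_pos {w : E} (hw : ‖w‖ < 1) : 0 < gam w := lt_of_lt_of_le one_pos (one_le_gam hw)

@[simp] lemma gam_zero : gam (0:E) = 1 := by simp [gam]

lemma gam_neg (w : E) : gam (-w) = gam w := by simp [gam]

lemma gam_sq {w : E} (hw : ‖w‖ < 1) : (gam w)^2 = (1 - ‖w‖^2)⁻¹ := by
  rw [gam, inv_pow, s_sq hw]

lemma gam_norm_inj {w w' : E} (hw : ‖w‖ < 1) (hw' : ‖w'‖ < 1) (h : gam w = gam w') :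
    ‖w‖ = ‖w'‖ := by
  have h2 : (gam w)^2 = (gam w')^2 := by rw [h]
  rw [gam_sq hw, gam_sq hw'] at h2
  have := inv_injective h2
  have h3 : ‖w‖^2 = ‖w'‖^2 := by linarith
  have := norm_nonneg w; have := norm_nonneg w'
  nlinarith

lemma gam_eAdd {u v : E} (hu : ‖u‖ < 1) (hv : ‖v‖ < 1) :
    gam (eAdd u v) = gam u * gam v * (1 + ⟪u,v⟫) := by
  have hd := one_add_inner_pos hu hv
  have h1 : 0 < gam (eAdd u v) := gam_pos (norm_eAdd_lt hu hv)
  have h2 : 0 < gam u * gam v * (1 + ⟪u,v⟫) := by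
    have := gam_pos hu; have := gam_pos hv; positivity
  have hsq : (gam (eAdd u v))^2 = (gam u * gam v * (1 + ⟪u,v⟫))^2 := by
    rw [mul_pow, mul_pow, gam_sq (norm_eAdd_lt hu hv), gam_sq hu, gam_sq hv]
    have g := gamma_sq_identity hu hv
    set d := ⟪u,v⟫ with hdd
    set A := ‖u‖^2 with hA
    set B := ‖v‖^2 with hB
    set C := ‖eAdd u v‖^2 with hC
    have e1 : (1:ℝ) - A ≠ 0 := by rw [hA]; nlinarith [norm_nonneg u]
    have e2 : (1:ℝ) - B ≠ 0 := by rw [hB]; nlinarith [norm_nonneg v]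
    have e3 : (1:ℝ) - C ≠ 0 := by rw [hC]; nlinarith [norm_nonneg (eAdd u v), norm_eAdd_lt hu hv]
    have e4 : (1:ℝ) + d ≠ 0 := ne_of_gt hd
    clear_value d A B C
    have hC2 : 1 - C = (1-A)*(1-B)/(1+d)^2 := by
      rw [eq_div_iff (pow_ne_zero _ e4)]; linarith [g]
    rw [hC2]
    field_simp
  nlinarith [hsq, h1, h2]


lemma eAdd_zero_left (v : E) : eAdd 0 v = v := by unfold eAdd; simp

lemma eAdd_zero_right (u : E) : eAdd u 0 = u := by unfold eAdd; simp

lemma eAdd_self {u : E} (hu : ‖u‖ < 1) : eAdd u u = (2/(1+‖u‖^2)) • u := by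
  have hs2 := s_sq hu
  have hsp := s_pos hu
  have hiu : ⟪u,u⟫ = ‖u‖^2 := real_inner_self_eq_norm_sq u
  rw [eAdd_closed_form, hiu]
  set s := Real.sqrt (1 - ‖u‖^2) with hs
  set A := ‖u‖^2 with hA
  have hA0 : 0 ≤ A := by positivity
  have hA1 : A < 1 := by nlinarith [norm_nonneg u]
  clear_value s A
  have h1 : (1:ℝ) + A ≠ 0 := by positivity
  have h2 : (1:ℝ) + s ≠ 0 := by positivity
  match_scalars
  have ha : A = 1 - s^2 := by linarith
  subst ha
  field_simp
  ring

lemma eAdd_neg_self {u : E} (hu : ‖u‖ < 1) : eAdd u (-u) = 0 := by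
  have hs2 := s_sq hu
  have hsp := s_pos hu
  have hiu : ⟪u,-u⟫ = -(‖u‖^2) := by
    rw [inner_neg_right, real_inner_self_eq_norm_sq]
  rw [eAdd_closed_form, hiu]
  set s := Real.sqrt (1 - ‖u‖^2) with hs
  set A := ‖u‖^2 with hA
  have hA0 : 0 ≤ A := by positivity
  have hA1 : A < 1 := by nlinarith [norm_nonneg u]
  clear_value s A
  have h1 : (1:ℝ) - A ≠ 0 := by nlinarith
  have h2 : (1:ℝ) + s ≠ 0 := by positivity
  have ha : A = 1 - s^2 := by linarith
  subst ha
  match_scalars <;> field_simp <;> ring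

lemma eAdd_eq_zero {u w : E} (hu : ‖u‖ < 1) (hw : ‖w‖ < 1) (h : eAdd u w = 0) : w = -u := by
  by_cases hu0 : u = 0
  · subst hu0; rw [eAdd_zero_left] at h; simp [h]
  · have hd := one_add_inner_pos hu hw
    have hs2 := s_sq hu
    have hsp := s_pos hu
    rw [eAdd_closed_form] at h
    set s := Real.sqrt (1 - ‖u‖^2) with hs
    set d := ⟪u,w⟫ with hdd
    set A0 := (1+s+d)/((1+d)*(1+s)) with hA0
    set B0 := s/(1+d) with hB0
    have hB : B0 ≠ 0 := div_ne_zero (ne_of_gt hsp) (ne_of_gt hd)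
    have hw_eq : w = (-(A0/B0)) • u := by
      have h2 : B0 • w = -(A0 • u) := by
        rw [add_comm] at h
        exact add_eq_zero_iff_eq_neg.1 h
      calc w = B0⁻¹ • (B0 • w) := by rw [smul_smul, inv_mul_cancel₀ hB, one_smul]
      _ = B0⁻¹ • -(A0 • u) := by rw [h2]
      _ = (-(A0/B0)) • u := by
          rw [smul_neg, smul_smul, ← neg_smul, div_eq_inv_mul]
    set μ := -(A0/B0) with hμdef
    have hdval : d = μ * ‖u‖^2 := by
      rw [hdd, hw_eq, inner_smul_right, real_inner_self_eq_norm_sq]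
    have hcoef : A0 + B0 * μ = 0 := by
      rw [hw_eq, smul_smul, ← add_smul] at h
      rcases smul_eq_zero.1 h with hc | hc
      · exact hc
      · exact absurd hc hu0
    have h1 : (1:ℝ)+s ≠ 0 := by positivity
    have hkey : (1+s+d) + s*μ*(1+s) = 0 := by
      have e : (1+s+d) + s*μ*(1+s) = ((1+d)*(1+s)) * (A0 + B0*μ) := by
        rw [hA0, hB0]; field_simp
      rw [e, hcoef, mul_zero]
    have hAeq : ‖u‖^2 = 1 - s^2 := by linarith
    rw [hdval, hAeq] at hkey
    have hfac : (1+s)*(1+μ) = 0 := by linear_combination hkey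
    have hμval : μ = -1 := by
      rcases mul_eq_zero.1 hfac with hf | hf
      · exact absurd hf h1
      · linarith
    rw [hw_eq, hμval, neg_one_smul]


lemma zero_mem : (0:E) ∈ eBall n := mem_eBall.2 (by simp)

lemma f_zero (f : E → E) (hb : Set.BijOn f (eBall n) (eBall n))
    (hh : ∀ u ∈ eBall n, ∀ v ∈ eBall n, f (eAdd u v) = eAdd (f u) (f v)) :
    f 0 = 0 := by
  have hf0 : ‖f 0‖ < 1 := mem_eBall.1 (hb.mapsTo zero_mem)
  have h := hh 0 zero_mem 0 zero_mem
  rw [eAdd_zero_left, eAdd_self hf0] at h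
  have hkey : (1 - 2/(1+‖f 0‖^2)) • f 0 = 0 := by
    rw [sub_smul, one_smul, sub_eq_zero]
    exact h
  rcases smul_eq_zero.1 hkey with hc | hc
  · exfalso
    have hpos : (0:ℝ) < 1 + ‖f 0‖^2 := by positivity
    have : 2/(1+‖f 0‖^2) = 1 := by linarith
    rw [div_eq_one_iff_eq (ne_of_gt hpos)] at this
    nlinarith [norm_nonneg (f 0)]
  · exact hc

lemma f_neg (f : E → E) (hb : Set.BijOn f (eBall n) (eBall n))
    (hh : ∀ u ∈ eBall n, ∀ v ∈ eBall n, f (eAdd u v) = eAdd (f u) (f v))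
    {w : E} (hw : w ∈ eBall n) : f (-w) = -(f w) := by
  have hnw : -w ∈ eBall n := mem_eBall.2 (by rw [norm_neg]; exact mem_eBall.1 hw)
  have h := hh w hw (-w) hnw
  rw [eAdd_neg_self (mem_eBall.1 hw), f_zero f hb hh] at h
  exact eAdd_eq_zero (mem_eBall.1 (hb.mapsTo hw)) (mem_eBall.1 (hb.mapsTo hnw)) h.symm

lemma gam_f_eAdd (f : E → E) (hb : Set.BijOn f (eBall n) (eBall n))
    (hh : ∀ u ∈ eBall n, ∀ v ∈ eBall n, f (eAdd u v) = eAdd (f u) (f v))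
    {u v : E} (hu : u ∈ eBall n) (hv : v ∈ eBall n) :
    gam (f (eAdd u v)) = gam (f u) * gam (f v) * (1 + ⟪f u, f v⟫) := by
  rw [hh u hu v hv, gam_eAdd (mem_eBall.1 (hb.mapsTo hu)) (mem_eBall.1 (hb.mapsTo hv))]

lemma norm_f_eAdd_comm (f : E → E) (hb : Set.BijOn f (eBall n) (eBall n))
    (hh : ∀ u ∈ eBall n, ∀ v ∈ eBall n, f (eAdd u v) = eAdd (f u) (f v))
    {u v : E} (hu : u ∈ eBall n) (hv : v ∈ eBall n) :
    ‖f (eAdd u v)‖ = ‖f (eAdd v u)‖ := by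
  have h1 := gam_f_eAdd f hb hh hu hv
  have h2 := gam_f_eAdd f hb hh hv hu
  apply gam_norm_inj
  · exact mem_eBall.1 (hb.mapsTo (eAdd_mem hu hv))
  · exact mem_eBall.1 (hb.mapsTo (eAdd_mem hv hu))
  · rw [h1, h2, real_inner_comm]
    ring


lemma arc_lemma (f : E → E) (hb : Set.BijOn f (eBall n) (eBall n))
    (hh : ∀ u ∈ eBall n, ∀ v ∈ eBall n, f (eAdd u v) = eAdd (f u) (f v))
    {ρ ν : ℝ} (hρ0 : 0 < ρ) (hρ1 : ρ < 1)
    {y nv : E} (hy : ‖y‖ = ρ) (hn : ‖nv‖ = 1) (hyn : ⟪y,nv⟫ = 0)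
    (hν1 : -(ρ^2/2) ≤ ν) (hν2 : ν ≤ 0) :
    ‖f ((Real.sqrt (ρ^2-ν^2)/ρ) • y + ν • nv)‖ = ‖f y‖ := by
  -- IVT to find t
  have hcont : Continuous (fun t : ℝ => -(t*ρ^2) / (1 + Real.sqrt ((1-t^2)*(1-ρ^2)))) := by
    apply Continuous.div
    · exact (continuous_id.mul continuous_const).neg
    · exact continuous_const.add (Real.continuous_sqrt.comp
        (((continuous_const.sub (continuous_pow 2)).mul continuous_const)))
    · intro x
      positivity
  have h9 : -((9/10:ℝ)*ρ^2) / (1 + Real.sqrt ((1-(9/10:ℝ)^2)*(1-ρ^2))) ≤ -(ρ^2/2) := by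
    have hs9nonneg : (0:ℝ) ≤ Real.sqrt ((1-(9/10:ℝ)^2)*(1-ρ^2)) := Real.sqrt_nonneg _
    have hs9le : Real.sqrt ((1-(9/10:ℝ)^2)*(1-ρ^2)) ≤ 4/5 := by
      have h1 : ((1:ℝ)-(9/10)^2)*(1-ρ^2) ≤ (4/5)^2 := by nlinarith
      calc Real.sqrt ((1-(9/10:ℝ)^2)*(1-ρ^2)) ≤ Real.sqrt ((4/5)^2) := Real.sqrt_le_sqrt h1
      _ = 4/5 := Real.sqrt_sq (by norm_num)
    rw [div_le_iff₀ (by positivity)]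
    nlinarith [mul_pos hρ0 hρ0]
  have hνmem : ν ∈ Set.Icc (-(((9:ℝ)/10)*ρ^2) / (1 + Real.sqrt ((1-(9/10:ℝ)^2)*(1-ρ^2)))) 0 := by
    constructor
    · linarith
    · exact hν2
  have hsub := intermediate_value_Icc' (by norm_num : (0:ℝ) ≤ 9/10) hcont.continuousOn
  have himg : ν ∈ (fun t : ℝ => -(t*ρ^2) / (1 + Real.sqrt ((1-t^2)*(1-ρ^2)))) '' Set.Icc 0 (9/10) := by
    apply hsub
    simpa using hνmem
  obtain ⟨t, ht, hteq⟩ := himg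
  simp only [] at hteq
  obtain ⟨ht0, ht9⟩ := ht
  have ht1 : t < 1 := lt_of_le_of_lt ht9 (by norm_num)
  have htsq : t^2 < 1 := by nlinarith
  have hcpos : 0 < Real.sqrt (1-t^2) := Real.sqrt_pos.2 (by nlinarith)
  have hc2 : (Real.sqrt (1-t^2))^2 = 1-t^2 := Real.sq_sqrt (by nlinarith)
  have hspos : 0 < Real.sqrt ((1-t^2)*(1-ρ^2)) :=
    Real.sqrt_pos.2 (mul_pos (by nlinarith) (by nlinarith))
  have hs2 : (Real.sqrt ((1-t^2)*(1-ρ^2)))^2 = (1-t^2)*(1-ρ^2) :=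
    Real.sq_sqrt (le_of_lt (mul_pos (by nlinarith) (by nlinarith)))
  set c := Real.sqrt (1-t^2) with hcdef
  set s := Real.sqrt ((1-t^2)*(1-ρ^2)) with hsdef
  set u := t • nv with hudef
  set vv := c • y - t • nv with hvvdef
  have hνval : ν = -(t*ρ^2)/(1+s) := hteq.symm
  -- basic norms and inners
  have hnu : ‖u‖ = t := by rw [hudef, norm_smul, hn, Real.norm_eq_abs, abs_of_nonneg ht0, mul_one]
  have hnu2 : ‖u‖^2 = t^2 := by rw [hnu]
  have hvv_comb : vv = c • y + (-t) • nv := by rw [hvvdef, neg_smul, sub_eq_add_neg]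
  have hnvv2 : ‖vv‖^2 = (1-t^2)*ρ^2 + t^2 := by
    rw [hvv_comb, normsq_comb, hyn, hy, hn]
    linear_combination ρ^2 * hc2
  have hvlt : ‖vv‖ < 1 := by nlinarith [norm_nonneg vv]
  have hsv : Real.sqrt (1-‖vv‖^2) = s := by
    rw [hsdef]; congr 1; rw [hnvv2]; ring
  have hiv : ⟪vv, u⟫ = -(t^2) := by
    have hyn' : ⟪nv, y⟫ = 0 := by rw [real_inner_comm]; exact hyn
    rw [hvv_comb, hudef]
    simp only [inner_add_left, inner_smul_left, inner_smul_right, map_neg, conj_trivial,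
      real_inner_self_eq_norm_sq]
    simp [hyn, hyn', hn]
    ring
  have hiu : ⟪u, vv⟫ = -(t^2) := by rw [real_inner_comm]; exact hiv
  have hum : u ∈ eBall n := mem_eBall.2 (by rw [hnu]; linarith)
  have hvm : vv ∈ eBall n := mem_eBall.2 hvlt
  have h1mt : (1:ℝ) - t^2 ≠ 0 := by nlinarith
  have h1pc : (1:ℝ) + c ≠ 0 := by positivity
  have h1ps : (1:ℝ) + s ≠ 0 := by positivity
  -- left inverse : eAdd u vv = y
  have hf1 : eAdd u vv = y := by
    rw [eAdd_closed_form, hiu, hnu2]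
    rw [show (1:ℝ) + -(t^2) = 1 - t^2 by ring]
    rw [← hcdef]
    rw [hvvdef, hudef]
    match_scalars
    · field_simp
      ring_nf
      linear_combination (-t) * hc2
    · field_simp
      ring_nf
      linear_combination hc2
  -- the value : eAdd vv u = target point
  have hg : eAdd vv u = (Real.sqrt (ρ^2-ν^2)/ρ) • y + ν • nv := by
    have hP0 : (0:ℝ) ≤ (1+s-t^2)/((1-t^2)*(1+s)) * c * ρ := by
      apply mul_nonneg (mul_nonneg _ hcpos.le) hρ0.le
      apply div_nonneg (by nlinarith) (by nlinarith)
    have hD2 : ((1-t^2)*(1+s))^2 ≠ 0 := by positivity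
    have h1ps2 : ((1:ℝ)+s)^2 ≠ 0 := by positivity
    have hPsq : ((1+s-t^2)/((1-t^2)*(1+s)) * c * ρ)^2 = ρ^2 - ν^2 := by
      have e1 : ((1+s-t^2)/((1-t^2)*(1+s)) * c * ρ)^2
          = (1+s-t^2)^2*(1-t^2)*ρ^2 / ((1-t^2)*(1+s))^2 := by
        rw [mul_pow, mul_pow, div_pow, hc2]; ring
      have e2 : ρ^2 - ν^2 = (ρ^2*(1+s)^2 - t^2*ρ^4)/ (1+s)^2 := by
        rw [hνval]; field_simp
      rw [e1, e2, div_eq_div_iff hD2 h1ps2]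
      linear_combination ((1-t^2)*(1+s)^2*ρ^2*t^2) * hs2
    have hProot : Real.sqrt (ρ^2-ν^2) = (1+s-t^2)/((1-t^2)*(1+s)) * c * ρ := by
      rw [← hPsq, Real.sqrt_sq hP0]
    rw [eAdd_closed_form, hsv, hiv]
    rw [show (1:ℝ) + -(t^2) = 1 - t^2 by ring]
    rw [hProot]
    rw [hvvdef, hudef]
    match_scalars
    all_goals (try rw [hνval])
    all_goals (field_simp; ring_nf)
    all_goals (linear_combination t * hs2)
  calc ‖f ((Real.sqrt (ρ^2-ν^2)/ρ) • y + ν • nv)‖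
      = ‖f (eAdd vv u)‖ := by rw [hg]
    _ = ‖f (eAdd u vv)‖ := norm_f_eAdd_comm f hb hh hvm hum
    _ = ‖f y‖ := by rw [hf1]


lemma rank_big (hn2 : 2 ≤ n) : 1 < Module.rank ℝ (EuclideanSpace ℝ (Fin n)) := by
  have h1 : (Module.finrank ℝ (EuclideanSpace ℝ (Fin n)) : Cardinal) = Module.rank ℝ (EuclideanSpace ℝ (Fin n)) :=
    Module.finrank_eq_rank ℝ _
  rw [← h1, finrank_euclideanSpace_fin]
  exact_mod_cast by omega

lemma norm_f_sphere (f : E → E) (hn2 : 2 ≤ n) (hb : Set.BijOn f (eBall n) (eBall n))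
    (hh : ∀ u ∈ eBall n, ∀ v ∈ eBall n, f (eAdd u v) = eAdd (f u) (f v))
    {w w' : E} (hw : w ∈ eBall n) (hw' : w' ∈ eBall n) (heq : ‖w‖ = ‖w'‖) :
    ‖f w‖ = ‖f w'‖ := by
  rcases eq_or_ne ‖w‖ 0 with h0 | h0
  · have hw0 : w = 0 := norm_eq_zero.1 h0
    have hw'0 : w' = 0 := norm_eq_zero.1 (by rw [← heq]; exact h0)
    rw [hw0, hw'0]
  · set ρ := ‖w‖ with hρ
    have hρ0 : 0 < ρ := lt_of_le_of_ne (norm_nonneg w) (Ne.symm h0)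
    have hρ1 : ρ < 1 := mem_eBall.1 hw
    have hloc : ∀ y z : E, ‖y‖ = ρ → ‖z‖ = ρ → ‖z - y‖ < min (ρ/2) (ρ^2/4) → ‖f z‖ = ‖f y‖ := by
      intro y z hy hz hdist
      have hε1 : ‖z - y‖ < ρ/2 := lt_of_lt_of_le hdist (min_le_left _ _)
      have hε2 : ‖z - y‖ < ρ^2/4 := lt_of_lt_of_le hdist (min_le_right _ _)
      have hzy : ρ^2 - ‖z-y‖*ρ ≤ ⟪z, y⟫ := by
        have e1 : ⟪z,y⟫ = ρ^2 - ⟪y - z, y⟫ := by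
          rw [inner_sub_left, real_inner_self_eq_norm_sq, hy]; ring
        have h2 : ⟪y - z, y⟫ ≤ ‖y - z‖*‖y‖ := real_inner_le_norm _ _
        have h3 : ‖y - z‖ = ‖z - y‖ := norm_sub_rev _ _
        rw [e1]
        rw [h3, hy] at h2
        linarith
      set cc := ⟪z, y⟫/ρ with hcc
      have hccpos : 0 < cc := by
        rw [hcc]; apply div_pos ?_ hρ0; nlinarith
      have hcle : cc ≤ ρ := by
        rw [hcc, div_le_iff₀ hρ0]
        calc ⟪z,y⟫ ≤ ‖z‖*‖y‖ := real_inner_le_norm _ _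
        _ = ρ*ρ := by rw [hz,hy]
      set orth := z - (cc/ρ) • y with horth
      have horthy : ⟪orth, y⟫ = 0 := by
        rw [horth, inner_sub_left, real_inner_smul_left, real_inner_self_eq_norm_sq, hy, hcc]
        field_simp
        ring
      by_cases ho : orth = 0
      · have hzeq : z = (cc/ρ) • y := by
          have := sub_eq_zero.1 ho
          rw [← this]
        have hnz : ‖z‖ = (cc/ρ)*ρ := by
          rw [hzeq, norm_smul, Real.norm_eq_abs, abs_of_pos (div_pos hccpos hρ0), hy]
        rw [hz, div_mul_cancel₀ _ hρ0.ne'] at hnz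
        rw [hzeq, ← hnz, div_self hρ0.ne', one_smul]
      · set ν0 := ‖orth‖ with hν0
        have hν0pos : 0 < ν0 := norm_pos_iff.2 ho
        set nvv := ν0⁻¹ • orth with hnvv
        have hnn : ‖nvv‖ = 1 := by
          rw [hnvv, norm_smul, Real.norm_eq_abs, abs_of_pos (inv_pos.2 hν0pos), ← hν0]
          field_simp
        have hynv : ⟪y, nvv⟫ = 0 := by
          rw [hnvv, inner_smul_right, real_inner_comm, horthy, mul_zero]
        have hzdecomp : z = (cc/ρ) • y + ν0 • nvv := by
          rw [hnvv, smul_smul, mul_inv_cancel₀ hν0pos.ne', one_smul, horth]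
          module
        have hpyth : cc^2 + ν0^2 = ρ^2 := by
          have hns := normsq_comb y nvv (cc/ρ) ν0
          rw [← hzdecomp, hz, hy, hnn, hynv] at hns
          have hρne : ρ ≠ 0 := hρ0.ne'
          field_simp at hns
          nlinarith [hns]
        have hν0le : ν0 ≤ 2*‖z - y‖ := by
          have e1 : orth = (z - y) - ((cc/ρ) - 1) • y := by
            rw [horth]; module
          have e2 : ν0 ≤ ‖z - y‖ + ‖((cc/ρ)-1) • y‖ := by
            rw [hν0, e1]
            exact norm_sub_le _ _
          have e3 : ‖((cc/ρ)-1) • y‖ = (1 - cc/ρ)*ρ := by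
            rw [norm_smul, Real.norm_eq_abs, hy, abs_of_nonpos (by
              have := (div_le_one hρ0).2 hcle
              linarith)]
            ring
          have e4 : (1 - cc/ρ)*ρ ≤ ‖z - y‖ := by
            have h6 : (1 - cc/ρ)*ρ = ρ - cc := by field_simp
            have h7 : ρ*ρ - ‖z-y‖*ρ ≤ cc*ρ := by
              rw [hcc, div_mul_cancel₀ _ hρ0.ne']
              nlinarith [hzy]
            rw [h6]
            nlinarith [hρ0]
          linarith
        have hν0small : ν0 ≤ ρ^2/2 := by linarith
        have harc := arc_lemma f hb hh hρ0 hρ1 (y := y) (nv := -nvv) hy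
          (by rw [norm_neg]; exact hnn)
          (by rw [inner_neg_right, hynv, neg_zero])
          (ν := -ν0) (by simpa using hν0small) (by linarith)
        have hpt : (Real.sqrt (ρ^2-(-ν0)^2)/ρ) • y + (-ν0) • (-nvv) = z := by
          have hsq : ρ^2 - (-ν0)^2 = cc^2 := by linear_combination (-1 : ℝ) * hpyth
          rw [hsq, Real.sqrt_sq hccpos.le, hzdecomp]
          module
        rw [hpt] at harc
        exact harc
    -- connectedness argument
    have hconn : IsPreconnected (Metric.sphere (0:E) ρ) :=
      (isConnected_sphere (rank_big hn2) 0 hρ0.le).isPreconnected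
    set ε := min (ρ/2) (ρ^2/4) with hε
    have hεpos : 0 < ε := lt_min (by positivity) (by positivity)
    set U := ⋃ z ∈ {z : E | z ∈ Metric.sphere (0:E) ρ ∧ ‖f z‖ = ‖f w‖}, Metric.ball z ε with hU
    set V := ⋃ z ∈ {z : E | z ∈ Metric.sphere (0:E) ρ ∧ ‖f z‖ ≠ ‖f w‖}, Metric.ball z ε with hV
    have hUopen : IsOpen U := isOpen_biUnion (fun _ _ => Metric.isOpen_ball)
    have hVopen : IsOpen V := isOpen_biUnion (fun _ _ => Metric.isOpen_ball)
    have hsphere_norm : ∀ x : E, x ∈ Metric.sphere (0:E) ρ → ‖x‖ = ρ := by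
      intro x hx
      simpa [mem_sphere_iff_norm] using hx
    have hcover : Metric.sphere (0:E) ρ ⊆ U ∪ V := by
      intro x hx
      by_cases hfx : ‖f x‖ = ‖f w‖
      · left; exact Set.mem_biUnion ⟨hx, hfx⟩ (Metric.mem_ball_self hεpos)
      · right; exact Set.mem_biUnion ⟨hx, hfx⟩ (Metric.mem_ball_self hεpos)
    have hwS : w ∈ Metric.sphere (0:E) ρ := by
      simp [mem_sphere_iff_norm, hρ]
    have hw'S : w' ∈ Metric.sphere (0:E) ρ := by
      simp [mem_sphere_iff_norm, ← heq]
    by_contra hne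
    have hU1 : (Metric.sphere (0:E) ρ ∩ U).Nonempty :=
      ⟨w, hwS, Set.mem_biUnion ⟨hwS, rfl⟩ (Metric.mem_ball_self hεpos)⟩
    have hV1 : (Metric.sphere (0:E) ρ ∩ V).Nonempty :=
      ⟨w', hw'S, Set.mem_biUnion ⟨hw'S, fun h => hne h.symm⟩ (Metric.mem_ball_self hεpos)⟩
    obtain ⟨x, hxS, hxU, hxV⟩ := hconn U V hUopen hVopen hcover hU1 hV1
    obtain ⟨z1, hz1, hxz1⟩ := Set.mem_iUnion₂.1 hxU
    obtain ⟨z2, hz2, hxz2⟩ := Set.mem_iUnion₂.1 hxV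
    have hfx1 : ‖f x‖ = ‖f z1‖ := by
      apply hloc z1 x (hsphere_norm _ hz1.1) (hsphere_norm _ hxS)
      rw [← dist_eq_norm]
      exact Metric.mem_ball.1 hxz1
    have hfx2 : ‖f x‖ = ‖f z2‖ := by
      apply hloc z2 x (hsphere_norm _ hz2.1) (hsphere_norm _ hxS)
      rw [← dist_eq_norm]
      exact Metric.mem_ball.1 hxz2
    exact hz2.2 (by rw [← hfx2, hfx1, hz1.2])


noncomputable def rr (p : ℝ) : ℝ := Real.sqrt (1 - ((1+p)⁻¹)^2)

lemma rr_nonneg (p : ℝ) : 0 ≤ rr p := Real.sqrt_nonneg _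

lemma rr_sq {p : ℝ} (hp : 0 ≤ p) : rr p ^ 2 = 1 - ((1+p)⁻¹)^2 := by
  have h0 : (0:ℝ) < 1 + p := by linarith
  have h1 : (1+p)⁻¹ ≤ 1 := by
    rw [inv_eq_one_div, div_le_one h0]; linarith
  have h2 : (0:ℝ) ≤ (1+p)⁻¹ := by positivity
  rw [rr, Real.sq_sqrt]
  nlinarith

lemma rr_lt_one {p : ℝ} (hp : 0 ≤ p) : rr p < 1 := by
  have h0 : (0:ℝ) < 1+p := by linarith
  have h2 : (0:ℝ) < (1+p)⁻¹ := by positivity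
  have h3 := rr_sq hp
  nlinarith [rr_nonneg p]

lemma norm_smul_single {r : ℝ} (hr : 0 ≤ r) (i : Fin n) :
    ‖r • (EuclideanSpace.single i (1:ℝ))‖ = r := by
  rw [norm_smul, EuclideanSpace.norm_single, Real.norm_eq_abs, abs_of_nonneg hr, norm_one, mul_one]

lemma gam_rr {p : ℝ} (hp : 0 ≤ p) (i : Fin n) :
    gam ((rr p) • (EuclideanSpace.single i (1:ℝ)) : E) = 1 + p := by
  have h0 : (0:ℝ) < 1+p := by linarith
  rw [gam, norm_smul_single (rr_nonneg p), rr_sq hp,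
    show (1:ℝ) - (1 - ((1+p)⁻¹)^2) = ((1+p)⁻¹)^2 by ring,
    Real.sqrt_sq (by positivity), inv_inv]

lemma rr_gam {w : E} (hw : ‖w‖ < 1) : rr (gam w - 1) = ‖w‖ := by
  have h1 : 1 + (gam w - 1) = gam w := by ring
  rw [rr, h1, gam, inv_inv, Real.sq_sqrt (by nlinarith [norm_nonneg w]),
    show (1:ℝ) - (1-‖w‖^2) = ‖w‖^2 by ring, Real.sqrt_sq (norm_nonneg w)]

noncomputable def gfun (f : E → E) (i : Fin n) (p : ℝ) : ℝ :=
  gam (f (rr p • EuclideanSpace.single i 1)) - 1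

lemma rr_smul_mem {p : ℝ} (hp : 0 ≤ p) (i : Fin n) :
    (rr p • EuclideanSpace.single i (1:ℝ) : E) ∈ eBall n :=
  mem_eBall.2 (by rw [norm_smul_single (rr_nonneg p)]; exact rr_lt_one hp)

lemma gam_f_eq (f : E → E) (hn2 : 2 ≤ n) (hb : Set.BijOn f (eBall n) (eBall n))
    (hh : ∀ u ∈ eBall n, ∀ v ∈ eBall n, f (eAdd u v) = eAdd (f u) (f v))
    {w : E} (hw : w ∈ eBall n) :
    gam (f w) = 1 + gfun f ⟨0, by omega⟩ (gam w - 1) := by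
  have hge : (0:ℝ) ≤ gam w - 1 := by linarith [one_le_gam (mem_eBall.1 hw)]
  have hnorm : ‖(rr (gam w - 1) • EuclideanSpace.single (⟨0, by omega⟩ : Fin n) (1:ℝ) : E)‖ = ‖w‖ := by
    rw [norm_smul_single (rr_nonneg _), rr_gam (mem_eBall.1 hw)]
  have hmem : (rr (gam w - 1) • EuclideanSpace.single (⟨0, by omega⟩ : Fin n) (1:ℝ) : E) ∈ eBall n :=
    mem_eBall.2 (by rw [hnorm]; exact mem_eBall.1 hw)
  have hns := norm_f_sphere f hn2 hb hh hw hmem hnorm.symm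
  rw [gfun, gam_eq_of_norm_eq hns]
  ring

lemma gfun_zero (f : E → E) (hb : Set.BijOn f (eBall n) (eBall n))
    (hh : ∀ u ∈ eBall n, ∀ v ∈ eBall n, f (eAdd u v) = eAdd (f u) (f v)) (i : Fin n) :
    gfun f i 0 = 0 := by
  have h1 : rr 0 = 0 := by simp [rr]
  rw [gfun, h1, zero_smul, f_zero f hb hh, gam_zero]
  ring

lemma gfun_nonneg (f : E → E) (hb : Set.BijOn f (eBall n) (eBall n)) (i : Fin n)
    {p : ℝ} (hp : 0 ≤ p) : 0 ≤ gfun f i p := by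
  have := one_le_gam (mem_eBall.1 (hb.mapsTo (rr_smul_mem hp i)))
  rw [gfun]
  linarith


lemma gam_f_pair (f : E → E) (hb : Set.BijOn f (eBall n) (eBall n))
    (hh : ∀ u ∈ eBall n, ∀ v ∈ eBall n, f (eAdd u v) = eAdd (f u) (f v))
    {u v : E} (hu : u ∈ eBall n) (hv : v ∈ eBall n) :
    gam (f (eAdd u v)) + gam (f (eAdd u (-v))) = 2 * gam (f u) * gam (f v) := by
  have hnv : -v ∈ eBall n := mem_eBall.2 (by rw [norm_neg]; exact mem_eBall.1 hv)
  rw [gam_f_eAdd f hb hh hu hv, gam_f_eAdd f hb hh hu hnv, f_neg f hb hh hv, gam_neg,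
    inner_neg_right]
  ring

lemma gfun_add (f : E → E) (hn2 : 2 ≤ n) (hb : Set.BijOn f (eBall n) (eBall n))
    (hh : ∀ u ∈ eBall n, ∀ v ∈ eBall n, f (eAdd u v) = eAdd (f u) (f v))
    {p q : ℝ} (hp : 0 ≤ p) (hq : 0 ≤ q) :
    gfun f ⟨0, by omega⟩ (p+q) = gfun f ⟨0, by omega⟩ p + gfun f ⟨0, by omega⟩ q := by
  rcases eq_or_lt_of_le (add_nonneg hp hq) with hpq | hpq0
  · have hp0 : p = 0 := by linarith
    have hq0 : q = 0 := by linarith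
    rw [hp0, hq0, add_zero, gfun_zero f hb hh]
    ring
  · set i0 : Fin n := ⟨0, by omega⟩ with hi0
    set i1 : Fin n := ⟨1, by omega⟩ with hi1
    set E0 : E := EuclideanSpace.single i0 (1:ℝ) with hE0def
    set E1 : E := EuclideanSpace.single i1 (1:ℝ) with hE1def
    have hne : i0 ≠ i1 := by
      rw [hi0, hi1]
      simp [Fin.mk.injEq]
    have hE00 : ⟪E0,E0⟫ = 1 := by
      rw [hE0def]
      simp [EuclideanSpace.inner_single_left, EuclideanSpace.single_apply]
    have hE01 : ⟪E0,E1⟫ = 0 := by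
      rw [hE0def, hE1def]
      simp [EuclideanSpace.inner_single_left, EuclideanSpace.single_apply]
      exact fun h => hne h
    have hE0n : ‖E0‖ = 1 := by rw [hE0def, EuclideanSpace.norm_single, norm_one]
    have hE1n : ‖E1‖ = 1 := by rw [hE1def, EuclideanSpace.norm_single, norm_one]
    set m2 := (2+p+q)/2 with hm2def
    have h2pq : (0:ℝ) < 2+p+q := by linarith
    have hm2 : 1 < m2 := by rw [hm2def]; linarith
    have hm2pos : 0 < m2 := by linarith
    have hm2inv : m2⁻¹ < 1 := by
      rw [inv_eq_one_div, div_lt_one hm2pos]; linarith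
    have hm2invpos : 0 < m2⁻¹ := by positivity
    set aa := Real.sqrt (1 - m2⁻¹) with haadef
    have haapos : 0 < aa := Real.sqrt_pos.2 (by linarith)
    have haa2 : aa^2 = 1 - m2⁻¹ := Real.sq_sqrt (by linarith)
    have haa1 : aa < 1 := by nlinarith
    set d := (p-q)/(2+p+q) with hddef
    have haa2' : aa^2 = (p+q)/(2+p+q) := by
      rw [haa2, hm2def]
      field_simp
      ring
    have hdabs : d^2 ≤ aa^4 := by
      have h4 : aa^4 = ((p+q)/(2+p+q))^2 := by rw [show aa^4 = (aa^2)^2 by ring, haa2']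
      rw [h4, hddef, div_pow, div_pow, div_le_div_iff₀ (by positivity) (by positivity)]
      nlinarith [mul_nonneg hp hq, sq_nonneg (2+p+q)]
    set α := d/aa with hαdef
    have hα2 : α^2 ≤ aa^2 := by
      rw [hαdef, div_pow, div_le_iff₀ (by positivity)]
      nlinarith [hdabs]
    set β := Real.sqrt (aa^2 - α^2) with hβdef
    have hβ2 : β^2 = aa^2 - α^2 := Real.sq_sqrt (by linarith)
    set u := aa • E0 with hudef
    set v := α • E0 + β • E1 with hvdef
    have hnu : ‖u‖ = aa := by rw [hudef, hE0def, norm_smul_single haapos.le]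
    have hnv2 : ‖v‖^2 = aa^2 := by
      rw [hvdef, normsq_comb, hE0n, hE1n, hE01]
      linear_combination hβ2
    have hnv : ‖v‖ = aa := by
      rw [← Real.sqrt_sq (norm_nonneg v), hnv2, Real.sqrt_sq haapos.le]
    have hduv : ⟪u,v⟫ = d := by
      rw [hudef, hvdef]
      rw [inner_add_right, real_inner_smul_left, real_inner_smul_left, real_inner_smul_right,
        real_inner_smul_right, hE00, hE01]
      rw [hαdef]
      field_simp
      ring
    have hu_mem : u ∈ eBall n := mem_eBall.2 (by rw [hnu]; exact haa1)
    have hv_mem : v ∈ eBall n := mem_eBall.2 (by rw [hnv]; exact haa1)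
    have hnegv_mem : -v ∈ eBall n := mem_eBall.2 (by rw [norm_neg, hnv]; exact haa1)
    have hgamu2 : (gam u)^2 = m2 := by
      rw [gam_sq (by rw [hnu]; exact haa1), show ‖u‖^2 = aa^2 by rw [hnu], haa2,
        show (1:ℝ) - (1-m2⁻¹) = m2⁻¹ by ring, inv_inv]
    have hgamv : gam v = gam u := gam_eq_of_norm_eq (by rw [hnv, hnu])
    have hgamfv : gam (f v) = gam (f u) :=
      gam_eq_of_norm_eq (norm_f_sphere f hn2 hb hh hv_mem hu_mem (by rw [hnv,hnu]))
    have hval1 : gam (eAdd u v) = 1 + p := by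
      rw [gam_eAdd (mem_eBall.1 hu_mem) (mem_eBall.1 hv_mem), hduv, hgamv,
        show gam u * gam u * (1+d) = (gam u)^2 * (1+d) by ring, hgamu2, hm2def, hddef]
      field_simp
      ring
    have hval2 : gam (eAdd u (-v)) = 1 + q := by
      rw [gam_eAdd (mem_eBall.1 hu_mem) (mem_eBall.1 hnegv_mem), inner_neg_right, hduv,
        gam_neg, hgamv, show gam u * gam u * (1 + -d) = (gam u)^2 * (1-d) by ring,
        hgamu2, hm2def, hddef]
      field_simp
      ring
    have hval3 : gam (eAdd u u) = 1 + (p+q) := by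
      rw [gam_eAdd (mem_eBall.1 hu_mem) (mem_eBall.1 hu_mem), real_inner_self_eq_norm_sq,
        show ‖u‖^2 = aa^2 by rw [hnu],
        show gam u * gam u * (1+aa^2) = (gam u)^2 * (1+aa^2) by ring, hgamu2, haa2, hm2def]
      field_simp
      ring
    have hE1eq := gam_f_pair f hb hh hu_mem hv_mem
    have hE2eq := gam_f_pair f hb hh hu_mem hu_mem
    have t1 : gam (f (eAdd u v)) = 1 + gfun f i0 p := by
      rw [gam_f_eq f hn2 hb hh (eAdd_mem hu_mem hv_mem), hval1, hi0,
        show (1:ℝ)+p-1 = p by ring]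
    have t2 : gam (f (eAdd u (-v))) = 1 + gfun f i0 q := by
      rw [gam_f_eq f hn2 hb hh (eAdd_mem hu_mem hnegv_mem), hval2, hi0,
        show (1:ℝ)+q-1 = q by ring]
    have t3 : gam (f (eAdd u u)) = 1 + gfun f i0 (p+q) := by
      rw [gam_f_eq f hn2 hb hh (eAdd_mem hu_mem hu_mem), hval3, hi0,
        show (1:ℝ)+(p+q)-1 = p+q by ring]
    have t4 : gam (f (eAdd u (-u))) = 1 := by
      rw [eAdd_neg_self (mem_eBall.1 hu_mem), f_zero f hb hh, gam_zero]
    rw [t1, t2, hgamfv] at hE1eq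
    rw [t3, t4] at hE2eq
    linarith

lemma gfun_main (f : E → E) (hn2 : 2 ≤ n) (hb : Set.BijOn f (eBall n) (eBall n))
    (hh : ∀ u ∈ eBall n, ∀ v ∈ eBall n, f (eAdd u v) = eAdd (f u) (f v))
    {p : ℝ} (hp : 0 ≤ p) :
    gfun f ⟨0, by omega⟩ (4*p+2*p^2) = 4 * gfun f ⟨0, by omega⟩ p + 2 * (gfun f ⟨0, by omega⟩ p)^2 := by
  set i0 : Fin n := ⟨0, by omega⟩ with hi0
  have h1p : (0:ℝ) < 1 + p := by linarith
  set u := rr p • EuclideanSpace.single i0 (1:ℝ) with hudef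
  have hu_mem : u ∈ eBall n := rr_smul_mem hp i0
  have hgamu : gam u = 1 + p := gam_rr hp i0
  have hnu2 : ‖u‖^2 = 1 - ((1+p)⁻¹)^2 := by
    rw [hudef, norm_smul_single (rr_nonneg p), rr_sq hp]
  have hval : gam (eAdd u u) = 1 + (4*p+2*p^2) := by
    rw [gam_eAdd (mem_eBall.1 hu_mem) (mem_eBall.1 hu_mem), real_inner_self_eq_norm_sq,
      hnu2, hgamu]
    field_simp
    ring
  have hpair := gam_f_pair f hb hh hu_mem hu_mem
  have t3 : gam (f (eAdd u u)) = 1 + gfun f i0 (4*p+2*p^2) := by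
    rw [gam_f_eq f hn2 hb hh (eAdd_mem hu_mem hu_mem), hval, hi0,
      show (1:ℝ)+(4*p+2*p^2)-1 = 4*p+2*p^2 by ring]
  have t4 : gam (f (eAdd u (-u))) = 1 := by
    rw [eAdd_neg_self (mem_eBall.1 hu_mem), f_zero f hb hh, gam_zero]
  have t5 : gam (f u) = 1 + gfun f i0 p := by
    rw [gam_f_eq f hn2 hb hh hu_mem, hgamu, hi0, show (1:ℝ)+p-1 = p by ring]
  rw [t3, t4, t5] at hpair
  nlinarith [hpair]


lemma abstract_g (g : ℝ → ℝ)
    (hadd : ∀ p q : ℝ, 0 ≤ p → 0 ≤ q → g (p+q) = g p + g q)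
    (hnn : ∀ p : ℝ, 0 ≤ p → 0 ≤ g p)
    (hmain : ∀ p : ℝ, 0 ≤ p → g (4*p+2*p^2) = 4 * g p + 2 * (g p)^2)
    (hnz : ∃ p : ℝ, 0 ≤ p ∧ g p ≠ 0) :
    ∀ p : ℝ, 0 ≤ p → g p = p := by
  have g0 : g 0 = 0 := by
    have := hadd 0 0 le_rfl le_rfl
    simp at this
    linarith
  have gsq : ∀ p : ℝ, 0 ≤ p → g (p^2) = (g p)^2 := by
    intro p hp
    have h1 := hmain p hp
    have h2 : g (4*p+2*p^2) = g (4*p) + g (2*p^2) := hadd _ _ (by positivity) (by positivity)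
    have h3 : g (4*p) = 4 * g p := by
      have e1 : g (p+p) = g p + g p := hadd p p hp hp
      have e2 : g (p+p+(p+p)) = g (p+p) + g (p+p) := hadd _ _ (by positivity) (by positivity)
      have e3 : (4:ℝ)*p = p+p+(p+p) := by ring
      rw [e3, e2, e1]; ring
    have h4 : g (2*p^2) = 2 * g (p^2) := by
      have e1 : g (p^2+p^2) = g (p^2) + g (p^2) := hadd _ _ (by positivity) (by positivity)
      have e3 : (2:ℝ)*p^2 = p^2+p^2 := by ring
      rw [e3, e1]; ring
    rw [h2, h3, h4] at h1
    linarith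
  have gmul : ∀ p q : ℝ, 0 ≤ p → 0 ≤ q → g (p*q) = g p * g q := by
    intro p q hp hq
    have h1 : g ((p+q)^2) = (g (p+q))^2 := gsq _ (by positivity)
    have h2 : ((p:ℝ)+q)^2 = p^2 + (2*(p*q) + q^2) := by ring
    have h3 : g (p^2 + (2*(p*q) + q^2)) = g (p^2) + (g (2*(p*q)) + g (q^2)) := by
      rw [hadd _ _ (by positivity) (by positivity), hadd _ _ (by positivity) (by positivity)]
    have h4 : g (2*(p*q)) = 2 * g (p*q) := by
      have e1 := hadd (p*q) (p*q) (by positivity) (by positivity)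
      have e3 : (2:ℝ)*(p*q) = p*q+p*q := by ring
      rw [e3, e1]; ring
    have h5 : g (p+q) = g p + g q := hadd _ _ hp hq
    rw [h2, h3, h4, gsq p hp, gsq q hq, h5] at h1
    nlinarith [h1]
  have mono : ∀ p q : ℝ, 0 ≤ p → p ≤ q → g p ≤ g q := by
    intro p q hp hpq
    have h1 : g (p + (q - p)) = g p + g (q-p) := hadd _ _ hp (by linarith)
    have h2 : p + (q-p) = q := by ring
    rw [h2] at h1
    have := hnn (q-p) (by linarith)
    linarith
  have g1 : g 1 = 1 := by
    have h1 : g 1 = g 1 * g 1 := by simpa using gmul 1 1 zero_le_one zero_le_one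
    by_contra hne
    have hfac : g 1 * (g 1 - 1) = 0 := by linear_combination (-1 : ℝ) * h1
    have hzero : g 1 = 0 := by
      rcases mul_eq_zero.1 hfac with h|h
      · exact h
      · exact absurd (by linarith : g 1 = 1) hne
    obtain ⟨p, hp, hgp⟩ := hnz
    have h2 : g p = g p * g 1 := by rw [← gmul p 1 hp zero_le_one, mul_one]
    rw [hzero, mul_zero] at h2
    exact hgp h2
  have gnat : ∀ k : ℕ, g k = k := by
    intro k
    induction k with
    | zero => simpa using g0
    | succ m ih =>
      have h1 := hadd m 1 (Nat.cast_nonneg m) zero_le_one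
      push_cast
      push_cast at h1
      rw [h1, ih, g1]
  have gnsmul : ∀ (k : ℕ) (x : ℝ), 0 ≤ x → g (k*x) = k * g x := by
    intro k
    induction k with
    | zero => intro x hx; simpa using g0
    | succ m ih =>
      intro x hx
      have h1 : ((m:ℝ)+1)*x = m*x + x := by ring
      push_cast
      rw [h1, hadd _ _ (by positivity) hx, ih x hx]
      ring
  have grat : ∀ s : ℚ, 0 ≤ s → g s = s := by
    intro s hs
    have hden : (0:ℝ) < (s.den:ℝ) := by exact_mod_cast s.den_pos
    have hnum : ((s.num.toNat : ℕ) : ℝ) = (s.num : ℝ) := by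
      exact_mod_cast Int.toNat_of_nonneg (Rat.num_nonneg.2 hs)
    have hxd : (s:ℝ) = (s.num:ℝ) / (s.den:ℝ) := by
      rw [Rat.cast_def]
    have hx0 : (0:ℝ) ≤ (s:ℝ) := by exact_mod_cast hs
    have h1 : g ((s.den:ℝ) * (s:ℝ)) = (s.den:ℝ) * g s := gnsmul s.den s hx0
    have h2 : (s.den:ℝ) * (s:ℝ) = (s.num:ℝ) := by
      rw [hxd]; field_simp
    rw [h2, ← hnum, gnat s.num.toNat] at h1
    rw [hnum] at h1
    have h4 : g (s:ℝ) = (s.num:ℝ)/(s.den:ℝ) := by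
      rw [eq_div_iff (ne_of_gt hden)]
      linarith [h1]
    rw [h4, ← hxd]
  intro x hx
  refine le_antisymm ?_ ?_
  · by_contra h
    push_neg at h
    obtain ⟨sq, h1, h2⟩ := exists_rat_btwn h
    have hq0 : (0:ℝ) ≤ (sq:ℝ) := le_trans hx (le_of_lt h1)
    have hq0' : (0:ℚ) ≤ sq := by exact_mod_cast hq0
    have h3 := mono x sq hx (le_of_lt h1)
    rw [grat sq hq0'] at h3
    linarith
  · by_contra h
    push_neg at h
    obtain ⟨sq, h1, h2⟩ := exists_rat_btwn h
    have hq0 : (0:ℝ) ≤ (sq:ℝ) := le_trans (hnn x hx) (le_of_lt h1)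
    have hq0' : (0:ℚ) ≤ sq := by exact_mod_cast hq0
    have h3 := mono sq x hq0 (le_of_lt h2)
    rw [grat sq hq0'] at h3
    linarith

lemma norm_pres (f : E → E) (hn2 : 2 ≤ n) (hb : Set.BijOn f (eBall n) (eBall n))
    (hh : ∀ u ∈ eBall n, ∀ v ∈ eBall n, f (eAdd u v) = eAdd (f u) (f v))
    {w : E} (hw : w ∈ eBall n) : ‖f w‖ = ‖w‖ := by
  have hnz : ∃ p : ℝ, 0 ≤ p ∧ gfun f (⟨0, by omega⟩ : Fin n) p ≠ 0 := by
    by_contra hc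
    push_neg at hc
    have hzero : ∀ w' ∈ eBall n, f w' = 0 := by
      intro w' hw'
      have h1 : gam (f w') = 1 := by
        rw [gam_f_eq f hn2 hb hh hw',
          hc _ (by linarith [one_le_gam (mem_eBall.1 hw')])]
        ring
      have h2 : ‖f w'‖ < 1 := mem_eBall.1 (hb.mapsTo hw')
      have h3 := gam_norm_inj h2 (by simp : ‖(0:E)‖ < 1) (by rw [h1, gam_zero])
      simpa using h3
    have hhalfmem : ((1/2 : ℝ) • EuclideanSpace.single (⟨0, by omega⟩ : Fin n) (1:ℝ) : E) ∈ eBall n :=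
      mem_eBall.2 (by rw [norm_smul_single (by norm_num)]; norm_num)
    have heq0 := hb.injOn hhalfmem zero_mem (by rw [hzero _ hhalfmem, hzero _ zero_mem])
    have hn0 : ‖((1/2 : ℝ) • EuclideanSpace.single (⟨0, by omega⟩ : Fin n) (1:ℝ) : E)‖ = 1/2 :=
      norm_smul_single (by norm_num) _
    rw [heq0] at hn0
    simp at hn0
  have hid := abstract_g (gfun f (⟨0, by omega⟩ : Fin n))
    (fun p q hp hq => gfun_add f hn2 hb hh hp hq)
    (fun p hp => gfun_nonneg f hb _ hp)
    (fun p hp => gfun_main f hn2 hb hh hp)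
    hnz
  have hge : 0 ≤ gam w - 1 := by linarith [one_le_gam (mem_eBall.1 hw)]
  have h1 : gam (f w) = gam w := by
    rw [gam_f_eq f hn2 hb hh hw, hid _ hge]
    ring
  exact gam_norm_inj (mem_eBall.1 (hb.mapsTo hw)) (mem_eBall.1 hw) h1

lemma inner_pres (f : E → E) (hn2 : 2 ≤ n) (hb : Set.BijOn f (eBall n) (eBall n))
    (hh : ∀ u ∈ eBall n, ∀ v ∈ eBall n, f (eAdd u v) = eAdd (f u) (f v))
    {u v : E} (hu : u ∈ eBall n) (hv : v ∈ eBall n) :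
    ⟪f u, f v⟫ = ⟪u, v⟫ := by
  have h1 := gam_f_eAdd f hb hh hu hv
  have h2 : gam (f (eAdd u v)) = gam (eAdd u v) :=
    gam_eq_of_norm_eq (norm_pres f hn2 hb hh (eAdd_mem hu hv))
  have h3 : gam (eAdd u v) = gam u * gam v * (1+⟪u,v⟫) :=
    gam_eAdd (mem_eBall.1 hu) (mem_eBall.1 hv)
  have h4 : gam (f u) = gam u := gam_eq_of_norm_eq (norm_pres f hn2 hb hh hu)
  have h5 : gam (f v) = gam v := gam_eq_of_norm_eq (norm_pres f hn2 hb hh hv)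
  rw [h2, h3, h4, h5] at h1
  have hgu := gam_pos (mem_eBall.1 hu)
  have hgv := gam_pos (mem_eBall.1 hv)
  have hne : gam u * gam v ≠ 0 := by positivity
  have h6 := mul_left_cancel₀ hne h1
  linarith

end EPf

open EPf in
theorem stmt_16 {n : ℕ} (hn : 2 ≤ n)
    (f : EuclideanSpace ℝ (Fin n) → EuclideanSpace ℝ (Fin n))
    (hbij : Set.BijOn f (eBall n) (eBall n))
    (hhom : ∀ u ∈ eBall n, ∀ v ∈ eBall n, f (eAdd u v) = eAdd (f u) (f v)) :
    ContinuousOn f (eBall n) ∧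
      ∃ T : EuclideanSpace ℝ (Fin n) ≃ₗᵢ[ℝ] EuclideanSpace ℝ (Fin n),
        ∀ u ∈ eBall n, f u = T u := by
  classical
  haveI : Nonempty (Fin n) := ⟨⟨0, by omega⟩⟩
  set b : Fin n → EuclideanSpace ℝ (Fin n) :=
    fun i => (2:ℝ) • f ((1/2 : ℝ) • EuclideanSpace.single i 1) with hbdef
  have hhalfmem : ∀ i : Fin n,
      ((1/2:ℝ) • EuclideanSpace.single i (1:ℝ) : EuclideanSpace ℝ (Fin n)) ∈ eBall n := fun i =>
    mem_eBall.2 (by rw [norm_smul_single (by norm_num)]; norm_num)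
  have hinner : ∀ i j, (⟪b i, b j⟫ : ℝ)
      = ⟪(EuclideanSpace.single i (1:ℝ) : EuclideanSpace ℝ (Fin n)), EuclideanSpace.single j (1:ℝ)⟫ := by
    intro i j
    rw [hbdef]
    simp only [real_inner_smul_left, real_inner_smul_right]
    rw [inner_pres f hn hbij hhom (hhalfmem i) (hhalfmem j),
      real_inner_smul_left, real_inner_smul_right]
    ring
  have hortho : Orthonormal ℝ b := by
    rw [orthonormal_iff_ite]
    intro i j
    rw [hinner i j]
    by_cases h : i = j
    · simp [h, EuclideanSpace.inner_single_left, EuclideanSpace.single_apply]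
    · simp [h, EuclideanSpace.inner_single_left, EuclideanSpace.single_apply, Ne.symm h]
  have hcard : Fintype.card (Fin n) = Module.finrank ℝ (EuclideanSpace ℝ (Fin n)) := by
    simp [finrank_euclideanSpace_fin]
  let basis := basisOfLinearIndependentOfCardEqFinrank hortho.linearIndependent hcard
  have hbasis_coe : ⇑basis = b := coe_basisOfLinearIndependentOfCardEqFinrank _ _
  have honb : Orthonormal ℝ ⇑basis := by rw [hbasis_coe]; exact hortho
  let onb : OrthonormalBasis (Fin n) ℝ (EuclideanSpace ℝ (Fin n)) := basis.toOrthonormalBasis honb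
  have honb_coe : ∀ i, onb i = b i := by
    intro i
    rw [show onb i = basis i from congrFun (Module.Basis.coe_toOrthonormalBasis basis honb) i, hbasis_coe]
  have key : ∀ u ∈ eBall n, f u = onb.repr.symm u := by
    intro u hu
    apply onb.repr.injective
    rw [LinearIsometryEquiv.apply_symm_apply]
    ext i
    rw [onb.repr_apply_apply, honb_coe i, hbdef]
    simp only [real_inner_smul_left]
    rw [inner_pres f hn hbij hhom (hhalfmem i) hu, real_inner_smul_left]
    rw [EuclideanSpace.inner_single_left]
    simp
  refine ⟨?_, ⟨onb.repr.symm, key⟩⟩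
  exact ((onb.repr.symm.continuous).continuousOn).congr key
end
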